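/- arXiv:2202.11627 — 3 statements merged into one kernel-verified Lean document; each statement's English description precedes it below -/
import Mathlib

section
/- Let 𝒢 be the set of paths in ℰ of the form (i) (UD)^k for some k ≥ 0, or (ii) (UD)^ℓ U^k C_k (UD)^m with ℓ, m ≥ 0 and k ≥ 2, or (iii) (UD)^{ℓ_0}U^{k_1}(UD)^{ℓ_1}U^{k_2}(UD)^{ℓ_2}⋯U^{k_r}(UD)^{ℓ_r}U^{k_{r+1}}C_s(UD)^{ℓ_{r+1}} with r ≥ 1, ℓ_0, ℓ_{r+1} ≥ 0, k_i ≥ 1 for 1 ≤ i ≤ r, k_{r+1} ≥ 0, ℓ_i ≥ 1 for 1 ≤ i ≤ r, and s ≥ 1 such that the path ends on the x-axis (with the convention C_1 = D). Then for every path P ∈ ℰ there exists exactly one path Q ∈ 𝒢 with |Q| = |P| such that P and Q are UD-equivalent. In other words, 𝒢 is a complete set of representatives of the UD-equivalence classes of ℰ. -/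
/-- Steps of a Dyck path with catastrophes: up-step `U`, down-step `D`,
and catastrophe step `C k` of size `k` (valid paths only use `k ≥ 2`). -/
inductive Step where
  | U : Step
  | D : Step
  | C : ℕ → Step
  deriving DecidableEq

/-- The vertical displacement of a step. -/
def Step.val : Step → ℤ
  | .U => 1
  | .D => -1
  | .C k => -(k : ℤ)

/-- The height (ordinate) of the path after its first `i` steps. -/
def hgt (P : List Step) (i : ℕ) : ℤ := ((P.take i).map Step.val).sum

/-- `InE P` means `P` is a Dyck path with catastrophes (a member of ℰ):
it stays at height ≥ 0, ends on the x-axis, and every catastrophe step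
`C k` has `k ≥ 2` and starts at height `k` (hence ends on the x-axis). -/
def InE (P : List Step) : Prop :=
  (∀ i, 0 ≤ hgt P i) ∧ hgt P P.length = 0 ∧
    ∀ i k, P[i]? = some (Step.C k) → 2 ≤ k ∧ hgt P i = (k : ℤ)

/-- `(UD)^k`. -/
def UDpow (k : ℕ) : List Step := (List.replicate k [Step.U, Step.D]).flatten

/-- `(DU)^k`. -/
def DUpow (k : ℕ) : List Step := (List.replicate k [Step.D, Step.U]).flatten

/-- `U^k`. -/
def Upow (k : ℕ) : List Step := List.replicate k Step.U

/-- `C_s` with the convention `C_1 = D`. -/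
def cfin (s : ℕ) : Step := if s = 1 then Step.D else Step.C s

/-- Test whether a step is a catastrophe step. -/
def isCatB : Step → Bool
  | .C _ => true
  | _ => false

/-- The number of catastrophe steps in a path. -/
def catCount (P : List Step) : ℕ := P.countP isCatB

/-- Two paths are `UD`-equivalent when the occurrences of the pattern `UD`
appear at the same positions in both paths. -/
def UDEquiv (P Q : List Step) : Prop :=
  ∀ i : ℕ, (P[i]? = some Step.U ∧ P[i + 1]? = some Step.D) ↔
    (Q[i]? = some Step.U ∧ Q[i + 1]? = some Step.D)

/-- Membership in 𝒢 : either (i) `(UD)^k`, or (ii) `(UD)^ℓ U^k C_k (UD)^m`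
with `k ≥ 2`, or (iii)
`(UD)^{ℓ_0} U^{k_1} (UD)^{ℓ_1} ⋯ U^{k_r} (UD)^{ℓ_r} U^{k_{r+1}} C_s (UD)^{ℓ_{r+1}}`
with `r ≥ 1`, `k_i ≥ 1` and `ℓ_i ≥ 1` for `1 ≤ i ≤ r`, `k_{r+1} ≥ 0`,
`ℓ_0, ℓ_{r+1} ≥ 0` and `s ≥ 1` (with the convention `C_1 = D`).
The blocks `U^{k_i} (UD)^{ℓ_i}` of (iii) are encoded by a list of pairs. -/
def InG (P : List Step) : Prop :=
  (∃ k, P = UDpow k) ∨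
  (∃ l k m, 2 ≤ k ∧ P = UDpow l ++ Upow k ++ [Step.C k] ++ UDpow m) ∨
  ∃ (l0 : ℕ) (mids : List (ℕ × ℕ)) (kr1 s lr1 : ℕ),
    mids ≠ [] ∧ (∀ t ∈ mids, 1 ≤ t.1 ∧ 1 ≤ t.2) ∧ 1 ≤ s ∧
    P = UDpow l0 ++ (mids.map (fun t => Upow t.1 ++ UDpow t.2)).flatten ++
      Upow kr1 ++ [cfin s] ++ UDpow lr1

section AuxProof

/-- An occurrence of the pattern `UD` at position `i`. -/
def occ (P : List Step) (i : ℕ) : Prop :=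
  P[i]? = some Step.U ∧ P[i + 1]? = some Step.D

instance (P : List Step) (i : ℕ) : Decidable (occ P i) := by unfold occ; infer_instance

/-- Position `i` is covered by an occurrence of `UD`. -/
def cov (P : List Step) (i : ℕ) : Prop := occ P i ∨ (0 < i ∧ occ P (i - 1))

instance (P : List Step) (i : ℕ) : Decidable (cov P i) := by unfold cov; infer_instance

/-- value of the step at position i (0 out of range) -/
def v (P : List Step) (i : ℕ) : ℤ := ((P[i]?).map Step.val).getD 0

lemma occ_lt {P : List Step} {i : ℕ} (h : occ P i) : i + 1 < P.length := by
  have := h.2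
  rw [List.getElem?_eq_some_iff] at this
  exact this.1

lemma occ_not_succ {P : List Step} {i : ℕ} (h : occ P i) : ¬ occ P (i + 1) := by
  intro h'
  have h1 := h'.1
  rw [h.2] at h1
  exact absurd h1 (by decide)

lemma v_of_occ {P : List Step} {i : ℕ} (h : occ P i) : v P i = 1 := by
  unfold v; rw [h.1]; rfl

lemma v_of_occ_succ {P : List Step} {i : ℕ} (h : occ P i) : v P (i + 1) = -1 := by
  unfold v; rw [h.2]; rfl

lemma hgt_succ (P : List Step) (i : ℕ) : hgt P (i + 1) = hgt P i + v P i := by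
  unfold hgt v
  rw [List.take_succ, List.map_append, List.sum_append]
  congr 1
  cases h : P[i]? <;> simp [h, Step.val]

lemma hgt_sum (P : List Step) (i : ℕ) : hgt P i = ∑ k ∈ Finset.range i, v P k := by
  induction i with
  | zero => simp [hgt]
  | succ i ih => rw [hgt_succ, Finset.sum_range_succ, ih]

lemma hgt_stab (P : List Step) {i : ℕ} (h : P.length ≤ i) : hgt P i = hgt P P.length := by
  unfold hgt
  rw [List.take_of_length_le h, List.take_length]

/-- key sum formula: at a position not covered from the left by an occurrence,
the height is the sum of values of uncovered positions before it. -/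
lemma hgt_eq_sum_uncov (P : List Step) (i : ℕ) (hi : ¬ (0 < i ∧ occ P (i - 1))) :
    hgt P i = ∑ k ∈ (Finset.range i).filter (fun k => ¬ cov P k), v P k := by
  classical
  rw [hgt_sum]
  rw [← Finset.sum_filter_add_sum_filter_not (Finset.range i) (fun k => cov P k)]
  have hzero : ∑ k ∈ (Finset.range i).filter (fun k => cov P k), v P k = 0 := by
    have hsplit : (Finset.range i).filter (fun k => cov P k)
        = (Finset.range i).filter (fun k => occ P k)
          ∪ (Finset.range i).filter (fun k => 0 < k ∧ occ P (k - 1)) := by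
      rw [← Finset.filter_or]
      rfl
    have hdisj : Disjoint ((Finset.range i).filter (fun k => occ P k))
        ((Finset.range i).filter (fun k => 0 < k ∧ occ P (k - 1))) := by
      rw [Finset.disjoint_left]
      intro a ha hb
      simp only [Finset.mem_filter] at ha hb
      have h1 := ha.2.1
      have h2 : P[a]? = some Step.D := by
        have := hb.2.2.2
        rwa [Nat.sub_add_cancel hb.2.1] at this
      rw [h2] at h1
      exact absurd h1 (by decide)
    rw [hsplit, Finset.sum_union hdisj]
    have himg : ((Finset.range i).filter (fun k => occ P k)).image (· + 1)
        = (Finset.range i).filter (fun k => 0 < k ∧ occ P (k - 1)) := by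
      ext q
      simp only [Finset.mem_image, Finset.mem_filter, Finset.mem_range]
      constructor
      · rintro ⟨p, ⟨hp, hpo⟩, rfl⟩
        refine ⟨?_, Nat.succ_pos p, by simpa using hpo⟩
        rcases Nat.lt_or_ge (p + 1) i with h | h
        · exact h
        · exfalso
          have : p + 1 = i := le_antisymm (by omega) h
          exact hi ⟨by omega, by rw [← this]; simpa using hpo⟩
      · rintro ⟨hq, hq0, hqo⟩
        exact ⟨q - 1, ⟨by omega, hqo⟩, by omega⟩
    rw [← himg, Finset.sum_image (by intro x _ y _ h; beta_reduce at h; omega)]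
    have h1 : ∑ k ∈ (Finset.range i).filter (fun k => occ P k), v P k
        = ((Finset.range i).filter (fun k => occ P k)).card := by
      rw [Finset.sum_congr rfl (fun a ha => v_of_occ (Finset.mem_filter.mp ha).2)]
      simp
    have h2 : ∑ k ∈ (Finset.range i).filter (fun k => occ P k), v P (k + 1)
        = -(((Finset.range i).filter (fun k => occ P k)).card : ℤ) := by
      rw [Finset.sum_congr rfl (fun a ha => v_of_occ_succ (Finset.mem_filter.mp ha).2)]
      simp
    rw [h1, h2]
    ring
  rw [hzero, zero_add]

end AuxProof
section AuxProof2

lemma UDpow_zero : UDpow 0 = [] := rfl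

lemma UDpow_succ (k : ℕ) : UDpow (k + 1) = Step.U :: Step.D :: UDpow k := by
  unfold UDpow
  rw [List.replicate_succ, List.flatten_cons]
  rfl

lemma length_UDpow (k : ℕ) : (UDpow k).length = 2 * k := by
  induction k with
  | zero => rfl
  | succ k ih => rw [UDpow_succ]; simp [ih]; omega

lemma Upow_succ (k : ℕ) : Upow (k + 1) = Step.U :: Upow k := rfl

lemma length_Upow (k : ℕ) : (Upow k).length = k := List.length_replicate

lemma val_cfin (s : ℕ) : (cfin s).val = -(s : ℤ) := by
  unfold cfin
  by_cases h : s = 1 <;> simp [h, Step.val]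

lemma cfin_ne_U (s : ℕ) : cfin s ≠ Step.U := by
  unfold cfin; by_cases h : s = 1 <;> simp [h]

/-- sum of values -/
lemma vsum_UDpow (k : ℕ) : ((UDpow k).map Step.val).sum = 0 := by
  induction k with
  | zero => rfl
  | succ k ih => rw [UDpow_succ]; simp [ih, Step.val]

lemma vsum_Upow (k : ℕ) : ((Upow k).map Step.val).sum = k := by
  induction k with
  | zero => rfl
  | succ k ih => rw [Upow_succ]; simp [ih, Step.val]; ring

lemma vsum_blocks (mids : List (ℕ × ℕ)) :
    (((mids.map (fun t => Upow t.1 ++ UDpow t.2)).flatten).map Step.val).sum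
      = ((mids.map (fun t => (t.1 : ℤ))).sum) := by
  induction mids with
  | nil => rfl
  | cons a rest ih =>
      rw [List.map_cons, List.flatten_cons, List.map_append, List.sum_append, ih]
      rw [List.map_append, List.sum_append, vsum_Upow, vsum_UDpow, List.map_cons, List.sum_cons]
      ring

/-- every position inside a `UDpow` block of a concatenation is covered -/
lemma cov_of_UDpow (l : ℕ) : ∀ (A B : List Step) (i : ℕ), A.length ≤ i →
    i < A.length + 2 * l → cov (A ++ (UDpow l ++ B)) i := by
  induction l with
  | zero => intro A B i h1 h2; omega
  | succ l ih =>
      intro A B i h1 h2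
      rw [UDpow_succ]
      have key : ∀ (j : ℕ), j = A.length → occ (A ++ (Step.U :: Step.D :: (UDpow l ++ B))) j := by
        intro j hj
        constructor
        · rw [hj, List.getElem?_append_right (le_refl _)]
          simp
        · rw [hj, List.getElem?_append_right (by omega)]
          simp
      rcases Nat.lt_or_ge i (A.length + 2) with h | h
      · rcases Nat.eq_or_lt_of_le h1 with h' | h'
        · exact Or.inl (key i h'.symm)
        · have : i = A.length + 1 := by omega
          exact Or.inr ⟨by omega, by rw [this]; simpa using key A.length rfl⟩
      · have := ih (A ++ [Step.U, Step.D]) B i (by simpa using (by omega : A.length + 2 ≤ i))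
          (by simp; omega)
        simpa using this

/-- positions inside a `Upow` block are `U` -/
lemma getElem_Upow (A B : List Step) (k i : ℕ) (h1 : A.length ≤ i) (h2 : i < A.length + k) :
    (A ++ (Upow k ++ B))[i]? = some Step.U := by
  rw [List.getElem?_append_right h1, List.getElem?_append_left (by rw [length_Upow]; omega)]
  unfold Upow
  rw [List.getElem?_replicate, if_pos (by omega)]

lemma getElem_mid (A B : List Step) (x : Step) : (A ++ ([x] ++ B))[A.length]? = some x := by
  rw [List.getElem?_append_right (le_refl _)]
  simp

/-- positions inside the flattened middle blocks are `U` or covered -/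
lemma shape_mids (mids : List (ℕ × ℕ)) : ∀ (A B : List Step) (i : ℕ), A.length ≤ i →
    i < A.length + ((mids.map (fun t => Upow t.1 ++ UDpow t.2)).flatten).length →
    (A ++ ((mids.map (fun t => Upow t.1 ++ UDpow t.2)).flatten ++ B))[i]? = some Step.U ∨
      cov (A ++ ((mids.map (fun t => Upow t.1 ++ UDpow t.2)).flatten ++ B)) i := by
  induction mids with
  | nil => intro A B i h1 h2; simp at h2; omega
  | cons a rest ih =>
      intro A B i h1 h2
      rw [List.map_cons, List.flatten_cons] at h2 ⊢
      have hw : A ++ ((Upow a.1 ++ UDpow a.2 ++ (rest.map (fun t => Upow t.1 ++ UDpow t.2)).flatten) ++ B)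
          = A ++ (Upow a.1 ++ (UDpow a.2 ++ ((rest.map (fun t => Upow t.1 ++ UDpow t.2)).flatten ++ B))) := by
        simp [List.append_assoc]
      rw [hw]
      rcases Nat.lt_or_ge i (A.length + a.1) with h | h
      · exact Or.inl (getElem_Upow A _ a.1 i h1 h)
      · rcases Nat.lt_or_ge i (A.length + a.1 + 2 * a.2) with h' | h'
        · have hw2 : A ++ (Upow a.1 ++ (UDpow a.2 ++ ((rest.map (fun t => Upow t.1 ++ UDpow t.2)).flatten ++ B)))
              = (A ++ Upow a.1) ++ (UDpow a.2 ++ ((rest.map (fun t => Upow t.1 ++ UDpow t.2)).flatten ++ B)) := by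
            simp [List.append_assoc]
          rw [hw2]
          exact Or.inr (cov_of_UDpow a.2 _ _ i (by simp [length_Upow]; omega) (by simp [length_Upow]; omega))
        · have hw3 : A ++ (Upow a.1 ++ (UDpow a.2 ++ ((rest.map (fun t => Upow t.1 ++ UDpow t.2)).flatten ++ B)))
              = (A ++ Upow a.1 ++ UDpow a.2) ++ ((rest.map (fun t => Upow t.1 ++ UDpow t.2)).flatten ++ B) := by
            simp [List.append_assoc]
          rw [hw3]
          refine ih _ B i (by simp [length_Upow, length_UDpow]; omega) ?_
          simp only [List.length_append, length_Upow, length_UDpow] at h2 ⊢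
          omega

end AuxProof2
section AuxProof3

lemma occ_drop (R : List Step) (k i : ℕ) : occ (R.drop k) i ↔ occ R (k + i) := by
  unfold occ
  rw [List.getElem?_drop, List.getElem?_drop, Nat.add_assoc]

lemma getElem_of_getElem?' {R : List Step} {i : ℕ} {x : Step} (h : R[i]? = some x) :
    ∃ hlt : i < R.length, R[i] = x := List.getElem?_eq_some_iff.mp h

lemma cons_drop {R : List Step} {i : ℕ} {x : Step} (h : R[i]? = some x) :
    R.drop i = x :: R.drop (i + 1) := by
  obtain ⟨hlt, hx⟩ := getElem_of_getElem?' h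
  rw [List.drop_eq_getElem_cons hlt, hx]

/-- a fully covered suffix (not split at the start) is a power of UD -/
lemma allcov_drop (N : ℕ) : ∀ (R : List Step) (a : ℕ), R.length - a ≤ N →
    (∀ i, a ≤ i → i < R.length → cov R i) → ¬ (0 < a ∧ occ R (a - 1)) →
    ∃ m, R.drop a = UDpow m := by
  induction N with
  | zero =>
      intro R a hN _ _
      exact ⟨0, List.drop_eq_nil_of_le (by omega)⟩
  | succ N ih =>
      intro R a hN hcov hsplit
      rcases Nat.lt_or_ge a R.length with ha | ha
      · have hc := hcov a (le_refl _) ha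
        have hocc : occ R a := by
          rcases hc with h | h
          · exact h
          · exact absurd h hsplit
        have hns : ¬ (0 < a + 2 ∧ occ R (a + 2 - 1)) := by
          rintro ⟨-, h⟩
          have : occ R (a + 1) := by simpa using h
          exact occ_not_succ hocc this
        obtain ⟨m, hm⟩ := ih R (a + 2) (by omega) (fun i h1 h2 => hcov i (by omega) h2) hns
        refine ⟨m + 1, ?_⟩
        rw [cons_drop hocc.1, cons_drop hocc.2, hm, UDpow_succ]
      · exact ⟨0, List.drop_eq_nil_of_le ha⟩

/-- decomposition lemma: a word whose uncovered positions are all `U`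
decomposes as `(UD)^{l0} ++ blocks ++ U^{kr1}`. -/
lemma Wprime (N : ℕ) : ∀ (R : List Step), R.length ≤ N →
    (∀ i, i < R.length → ¬ cov R i → R[i]? = some Step.U) →
    ∃ (l0 : ℕ) (mids : List (ℕ × ℕ)) (kr1 : ℕ),
      (∀ t ∈ mids, 1 ≤ t.1 ∧ 1 ≤ t.2) ∧
      R = UDpow l0 ++ (mids.map (fun t => Upow t.1 ++ UDpow t.2)).flatten ++ Upow kr1 := by
  induction N with
  | zero =>
      intro R hN _
      refine ⟨0, [], 0, by simp, ?_⟩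
      have : R = [] := List.eq_nil_of_length_eq_zero (by omega)
      simp [this, UDpow_zero, Upow]
  | succ N ih =>
      intro R hN h1
      rcases Nat.eq_zero_or_pos R.length with hz | hpos
      · refine ⟨0, [], 0, by simp, ?_⟩
        have : R = [] := List.eq_nil_of_length_eq_zero hz
        simp [this, UDpow_zero, Upow]
      by_cases hocc : occ R 0
      · -- R = U :: D :: R.drop 2
        have e0 : R = Step.U :: R.drop 1 := cons_drop hocc.1
        have e1 : R.drop 1 = Step.D :: R.drop 2 := cons_drop hocc.2
        have hR : R = Step.U :: Step.D :: R.drop 2 := by rw [e1] at e0; exact e0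
        have hlen2 : (R.drop 2).length ≤ N := by
          rw [List.length_drop]; omega
        have h1' : ∀ i, i < (R.drop 2).length → ¬ cov (R.drop 2) i → (R.drop 2)[i]? = some Step.U := by
          intro i hi hci
          rw [List.getElem?_drop]
          refine h1 (2 + i) (by rw [List.length_drop] at hi; omega) ?_
          intro hc
          apply hci
          rcases hc with h | h
          · exact Or.inl ((occ_drop R 2 i).mpr h)
          · rcases Nat.eq_zero_or_pos i with rfl | hip
            · -- occ R 1 impossible
              have : occ R 1 := by simpa using h.2
              exact absurd this (occ_not_succ hocc)
            · have h21 : 2 + i - 1 = 2 + (i - 1) := by omega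
              exact Or.inr ⟨hip, (occ_drop R 2 (i-1)).mpr (h21 ▸ h.2)⟩
        obtain ⟨l0, mids, kr1, hm, heq⟩ := ih (R.drop 2) hlen2 h1'
        refine ⟨l0 + 1, mids, kr1, hm, ?_⟩
        rw [hR, heq, UDpow_succ]
        simp
      · -- first position uncovered, hence U
        have hcov0 : ¬ cov R 0 := by
          rintro (h | h)
          · exact hocc h
          · omega
        have hU : R[0]? = some Step.U := h1 0 hpos hcov0
        have hR : R = Step.U :: R.drop 1 := cons_drop hU
        have hlen1 : (R.drop 1).length ≤ N := by rw [List.length_drop]; omega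
        have h1' : ∀ i, i < (R.drop 1).length → ¬ cov (R.drop 1) i → (R.drop 1)[i]? = some Step.U := by
          intro i hi hci
          rw [List.getElem?_drop]
          refine h1 (1 + i) (by rw [List.length_drop] at hi; omega) ?_
          intro hc
          apply hci
          rcases hc with h | h
          · exact Or.inl ((occ_drop R 1 i).mpr h)
          · rcases Nat.eq_zero_or_pos i with rfl | hip
            · exact absurd (by simpa using h.2) hocc
            · have h11 : 1 + i - 1 = 1 + (i - 1) := by omega
              exact Or.inr ⟨hip, (occ_drop R 1 (i-1)).mpr (h11 ▸ h.2)⟩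
        obtain ⟨l0, mids, kr1, hm, heq⟩ := ih (R.drop 1) hlen1 h1'
        rcases Nat.eq_zero_or_pos l0 with rfl | hl0
        · cases mids with
          | nil =>
              refine ⟨0, [], kr1 + 1, by simp, ?_⟩
              rw [hR, heq]
              simp [UDpow_zero, Upow_succ]
          | cons a rest =>
              refine ⟨0, (a.1 + 1, a.2) :: rest, kr1, ?_, ?_⟩
              · intro t ht
                rcases List.mem_cons.mp ht with rfl | ht
                · exact ⟨by omega, (hm a (by simp)).2⟩
                · exact hm t (by simp [ht])
              · rw [hR, heq]
                simp only [UDpow_zero, List.nil_append, List.map_cons, List.flatten_cons]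
                rw [Upow_succ]
                simp [List.append_assoc]
        · -- l0 ≥ 1 : new block (1, l0)
          refine ⟨0, (1, l0) :: mids, kr1, ?_, ?_⟩
          · intro t ht
            rcases List.mem_cons.mp ht with rfl | ht
            · exact ⟨le_refl _, hl0⟩
            · exact hm t ht
          · rw [hR, heq]
            simp only [UDpow_zero, List.nil_append, List.map_cons, List.flatten_cons]
            have : Upow 1 ++ UDpow l0 = Step.U :: UDpow l0 := rfl
            rw [this]
            simp [List.append_assoc]

end AuxProof3
section AuxProof4

/-- uncovered positions -/
def Tset (P : List Step) : Finset ℕ :=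
  (Finset.range P.length).filter (fun k => ¬ cov P k)

noncomputable def jpos (P : List Step) : ℕ :=
  if h : (Tset P).Nonempty then (Tset P).max' h else P.length

def tnum (P : List Step) : ℕ := (Tset P).card

noncomputable def canonF (P : List Step) (i : ℕ) : Step :=
  if occ P i then Step.U
  else if 0 < i ∧ occ P (i - 1) then Step.D
  else if i = jpos P then cfin (tnum P - 1) else Step.U

noncomputable def canon (P : List Step) : List Step :=
  (List.range P.length).map (canonF P)

lemma length_canon (P : List Step) : (canon P).length = P.length := by
  simp [canon]

lemma canon_get (P : List Step) {i : ℕ} (hi : i < P.length) :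
    (canon P)[i]? = some (canonF P i) := by
  simp [canon, hi]

lemma mem_Tset {P : List Step} {i : ℕ} : i ∈ Tset P ↔ i < P.length ∧ ¬ cov P i := by
  simp [Tset]

lemma jpos_mem {P : List Step} (h : (Tset P).Nonempty) : jpos P ∈ Tset P := by
  rw [jpos, dif_pos h]; exact (Tset P).max'_mem h

lemma le_jpos {P : List Step} {k : ℕ} (hk : k ∈ Tset P) : k ≤ jpos P := by
  rw [jpos, dif_pos ⟨k, hk⟩]; exact (Tset P).le_max' k hk

lemma jpos_lt {P : List Step} (h : (Tset P).Nonempty) : jpos P < P.length :=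
  (mem_Tset.mp (jpos_mem h)).1

/-- values of steps of a path in ℰ are nonzero; more precisely the possible values -/
lemma v_cases {P : List Step} (hP : InE P) {i : ℕ} (hi : i < P.length) :
    v P i = 1 ∨ v P i = -1 ∨ (v P i ≤ -2 ∧ hgt P i = -(v P i)) := by
  have hsome : P[i]? = some P[i] := List.getElem?_eq_getElem hi
  unfold v
  rw [hsome]
  cases hx : P[i] with
  | U => left; rfl
  | D => right; left; rfl
  | C k =>
      right; right
      have := hP.2.2 i k (by rw [hsome, hx])
      simp [Step.val]
      constructor
      · omega
      · rw [this.2]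
  
/-- the heights at uncovered-from-left positions, for bound computations -/
lemma uncovF_eq (P : List Step) : (Finset.range P.length).filter (fun k => ¬ cov P k) = Tset P := rfl

lemma not_pocc_length (P : List Step) : ¬ (0 < P.length ∧ occ P (P.length - 1)) := by
  rintro ⟨hpos, hocc⟩
  have := occ_lt hocc
  omega

lemma hgt_length_eq_sum (P : List Step) : hgt P P.length = ∑ k ∈ Tset P, v P k := by
  rw [hgt_eq_sum_uncov P P.length (not_pocc_length P)]
  rfl

/-- if `i` is uncovered, the prefix sum formula applies and ranges over `Tset ∩ [0,i)`. -/
lemma hgt_of_uncov (P : List Step) {i : ℕ} (h : ¬ cov P i) :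
    hgt P i = ∑ k ∈ (Finset.range i).filter (fun k => ¬ cov P k), v P k := by
  refine hgt_eq_sum_uncov P i ?_
  intro hc
  exact h (Or.inr hc)

/-- a minimal uncovered position of a path in ℰ carries a `U`. -/
lemma min_uncov_U {P : List Step} (hP : InE P) {i : ℕ} (hi : i ∈ Tset P)
    (hmin : ∀ k ∈ Tset P, i ≤ k) : P[i]? = some Step.U := by
  obtain ⟨hilt, hicov⟩ := mem_Tset.mp hi
  have hempty : (Finset.range i).filter (fun k => ¬ cov P k) = ∅ := by
    rw [Finset.filter_eq_empty_iff]
    intro k hk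
    rw [Finset.mem_range] at hk
    by_contra hkc
    have : k ∈ Tset P := mem_Tset.mpr ⟨by omega, hkc⟩
    have := hmin k this
    omega
  have hh : hgt P i = 0 := by rw [hgt_of_uncov P hicov, hempty, Finset.sum_empty]
  have hnext : hgt P (i + 1) = v P i := by rw [hgt_succ, hh, zero_add]
  have hge := hP.1 (i + 1)
  rw [hnext] at hge
  rcases v_cases hP hilt with h | h | h
  · unfold v at h
    cases hx : P[i]? with
    | none => rw [hx] at h; simp at h
    | some x =>
        rw [hx] at h
        cases x with
        | U => rfl
        | D => simp [Step.val] at h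
        | C k => simp [Step.val] at h; omega
  · omega
  · rw [hh] at h; omega

/-- number of uncovered positions of a path in ℰ is never 1 -/
lemma tnum_ne_one {P : List Step} (hP : InE P) : tnum P ≠ 1 := by
  intro h1
  obtain ⟨x, hx⟩ := Finset.card_eq_one.mp h1
  have hsum : hgt P P.length = ∑ k ∈ Tset P, v P k := hgt_length_eq_sum P
  rw [hP.2.1, hx, Finset.sum_singleton] at hsum
  have hxT : x ∈ Tset P := by rw [hx]; simp
  rcases v_cases hP (mem_Tset.mp hxT).1 with h | h | h <;> omega

/-- adjacent uncovered pair impossible when `tnum = 2` -/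
lemma no_adjacent_pair {P : List Step} (hP : InE P) {i : ℕ} (h2 : tnum P = 2)
    (hi : i ∈ Tset P) (hi1 : i + 1 ∈ Tset P) : False := by
  have hTeq : Tset P = {i, i + 1} := by
    obtain ⟨x, y, hxy, hset⟩ := Finset.card_eq_two.mp h2
    rw [hset] at hi hi1 ⊢
    simp at hi hi1
    rcases hi with rfl | rfl <;> rcases hi1 with h | h
    · omega
    · rw [← h]
    · rw [← h, Finset.pair_comm]
    · omega
  have hmin : ∀ k ∈ Tset P, i ≤ k := by
    intro k hk
    rw [hTeq] at hk
    simp at hk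
    rcases hk with rfl | rfl <;> omega
  have hU := min_uncov_U hP hi hmin
  have hsum : (0:ℤ) = v P i + v P (i+1) := by
    have := hgt_length_eq_sum P
    rw [hP.2.1, hTeq, Finset.sum_pair (by omega)] at this
    exact this
  have hvi : v P i = 1 := by unfold v; rw [hU]; rfl
  have hvi1 : v P (i + 1) = -1 := by omega
  -- then P[i+1] = D, giving an occurrence at i
  have hlt1 : i + 1 < P.length := (mem_Tset.mp hi1).1
  have hD : P[i+1]? = some Step.D := by
    have hsome : P[i+1]? = some P[i+1] := List.getElem?_eq_getElem hlt1
    unfold v at hvi1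
    rw [hsome] at hvi1 ⊢
    cases hx : P[i+1] with
    | U => rw [hx] at hvi1; simp [Step.val] at hvi1
    | D => rfl
    | C k =>
        rw [hx] at hvi1
        have := hP.2.2 (i+1) k (by rw [hsome, hx])
        simp [Step.val] at hvi1
        omega
  have : occ P i := ⟨hU, hD⟩
  exact (mem_Tset.mp hi).2 (Or.inl this)

end AuxProof4
section AuxProof5

lemma pocc_disj {P : List Step} {i : ℕ} (h : occ P i) : ¬ (0 < i ∧ occ P (i - 1)) := by
  rintro ⟨hpos, h'⟩
  have hD : P[i]? = some Step.D := by
    have := h'.2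
    rwa [Nat.sub_add_cancel hpos] at this
  have := h.1
  rw [hD] at this
  exact absurd this (by decide)

lemma cfin_eq_D {s : ℕ} : cfin s = Step.D ↔ s = 1 := by
  unfold cfin
  by_cases h : s = 1 <;> simp [h]

lemma cfin_eq_C {s k : ℕ} (h : cfin s = Step.C k) : s ≠ 1 ∧ k = s := by
  unfold cfin at h
  by_cases hs : s = 1
  · rw [if_pos hs] at h; simp at h
  · rw [if_neg hs] at h
    exact ⟨hs, (Step.C.inj h).symm⟩

lemma canonF_occ {P : List Step} {i : ℕ} (h : occ P i) : canonF P i = Step.U := by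
  rw [canonF, if_pos h]

lemma canonF_pocc {P : List Step} {i : ℕ} (h0 : 0 < i) (h : occ P (i - 1)) :
    canonF P i = Step.D := by
  have hno : ¬ occ P i := by
    intro h'
    exact pocc_disj h' ⟨h0, h⟩
  rw [canonF, if_neg hno, if_pos ⟨h0, h⟩]

lemma canonF_uncov_ne {P : List Step} {i : ℕ} (h : ¬ cov P i) (hj : i ≠ jpos P) :
    canonF P i = Step.U := by
  rw [canonF, if_neg (fun h' => h (Or.inl h')), if_neg (fun h' => h (Or.inr h')), if_neg hj]

lemma canonF_uncov_j {P : List Step} {i : ℕ} (h : ¬ cov P i) (hj : i = jpos P) :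
    canonF P i = cfin (tnum P - 1) := by
  rw [canonF, if_neg (fun h' => h (Or.inl h')), if_neg (fun h' => h (Or.inr h')), if_pos hj]

lemma occ_canon {P : List Step} (hP : InE P) (i : ℕ) : occ P i ↔ occ (canon P) i := by
  constructor
  · intro h
    have hlt := occ_lt h
    constructor
    · rw [canon_get P (by omega), canonF_occ h]
    · rw [canon_get P hlt, canonF_pocc (Nat.succ_pos i) (by simpa using h)]
  · rintro ⟨h1, h2⟩
    have hi : i < P.length := by
      have := (List.getElem?_eq_some_iff.mp h1).1
      rwa [length_canon] at this
    have hi1 : i + 1 < P.length := by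
      have := (List.getElem?_eq_some_iff.mp h2).1
      rwa [length_canon] at this
    rw [canon_get P hi] at h1
    rw [canon_get P hi1] at h2
    have hc1 : canonF P i = Step.U := Option.some.inj h1
    have hc2 : canonF P (i+1) = Step.D := Option.some.inj h2
    by_cases ho : occ P i
    · exact ho
    exfalso
    -- position i is uncovered and not jpos
    have hpo : ¬ (0 < i ∧ occ P (i - 1)) := by
      intro hp
      rw [canonF_pocc hp.1 hp.2] at hc1
      exact absurd hc1 (by decide)
    have hcovi : ¬ cov P i := by rintro (h | h) <;> [exact ho h; exact hpo h]
    have hij : i ≠ jpos P := by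
      intro hij
      rw [canonF_uncov_j hcovi hij] at hc1
      exact cfin_ne_U _ hc1
    -- position i+1 : must be uncovered with i+1 = jpos and tnum = 2
    have ho1 : ¬ occ P (i+1) := by
      intro h'
      rw [canonF_occ h'] at hc2
      exact absurd hc2 (by decide)
    have hpo1 : ¬ (0 < i + 1 ∧ occ P (i + 1 - 1)) := by
      rintro ⟨-, h'⟩
      exact ho (by simpa using h')
    have hcovi1 : ¬ cov P (i+1) := by rintro (h | h) <;> [exact ho1 h; exact hpo1 h]
    have hij1 : i + 1 = jpos P := by
      by_contra h'
      rw [canonF_uncov_ne hcovi1 h'] at hc2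
      exact absurd hc2 (by decide)
    rw [canonF_uncov_j hcovi1 hij1] at hc2
    have ht : tnum P - 1 = 1 := cfin_eq_D.mp hc2
    have ht2 : tnum P = 2 := by
      have hmem : i + 1 ∈ Tset P := mem_Tset.mpr ⟨hi1, hcovi1⟩
      have : 1 ≤ tnum P := Finset.card_pos.mpr ⟨i+1, hmem⟩
      omega
    exact no_adjacent_pair hP ht2 (mem_Tset.mpr ⟨hi, hcovi⟩) (mem_Tset.mpr ⟨hi1, hcovi1⟩)

lemma cov_canon {P : List Step} (hP : InE P) (i : ℕ) : cov P i ↔ cov (canon P) i := by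
  unfold cov
  rw [occ_canon hP i]
  constructor
  · rintro (h | ⟨h0, h⟩)
    · exact Or.inl h
    · exact Or.inr ⟨h0, (occ_canon hP _).mp h⟩
  · rintro (h | ⟨h0, h⟩)
    · exact Or.inl h
    · exact Or.inr ⟨h0, (occ_canon hP _).mpr h⟩

lemma v_canon_uncov_ne {P : List Step} {i : ℕ} (hi : i < P.length) (h : ¬ cov P i)
    (hj : i ≠ jpos P) : v (canon P) i = 1 := by
  unfold v
  rw [canon_get P hi, canonF_uncov_ne h hj]
  rfl

lemma v_canon_uncov_j {P : List Step} {i : ℕ} (hi : i < P.length) (h : ¬ cov P i)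
    (hj : i = jpos P) : v (canon P) i = -((tnum P - 1 : ℕ) : ℤ) := by
  unfold v
  rw [canon_get P hi, canonF_uncov_j h hj]
  simp [val_cfin]

/-- the master height formula for the canonical word -/
lemma hgt_canon_eq {P : List Step} (hP : InE P) {i : ℕ} (hi : i ≤ P.length)
    (hni : ¬ (0 < i ∧ occ P (i - 1))) :
    hgt (canon P) i = if jpos P < i then 0
      else (((Finset.range i).filter (fun k => ¬ cov P k)).card : ℤ) := by
  have hni' : ¬ (0 < i ∧ occ (canon P) (i - 1)) := by
    rintro ⟨h0, h⟩
    exact hni ⟨h0, (occ_canon hP _).mpr h⟩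
  rw [hgt_eq_sum_uncov (canon P) i hni']
  have hfilter : (Finset.range i).filter (fun k => ¬ cov (canon P) k)
      = (Finset.range i).filter (fun k => ¬ cov P k) := by
    apply Finset.filter_congr
    intro k _
    rw [cov_canon hP k]
  rw [hfilter]
  set F := (Finset.range i).filter (fun k => ¬ cov P k) with hF
  have hsubT : ∀ k ∈ F, k ∈ Tset P := by
    intro k hk
    rw [hF, Finset.mem_filter, Finset.mem_range] at hk
    exact mem_Tset.mpr ⟨by omega, hk.2⟩
  by_cases hjlt : jpos P < i
  · rw [if_pos hjlt]
    have hne : (Tset P).Nonempty := by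
      by_contra hne
      rw [Finset.not_nonempty_iff_eq_empty] at hne
      have : jpos P = P.length := by rw [jpos, dif_neg (by rw [hne]; simp)]
      omega
    have hFT : F = Tset P := by
      apply Finset.Subset.antisymm
      · intro k hk; exact hsubT k hk
      · intro k hk
        rw [hF, Finset.mem_filter, Finset.mem_range]
        exact ⟨by have := le_jpos hk; omega, (mem_Tset.mp hk).2⟩
    rw [hFT]
    have hjmem := jpos_mem hne
    rw [← Finset.add_sum_erase _ _ hjmem]
    have herase : ∑ k ∈ (Tset P).erase (jpos P), v (canon P) k
        = (((Tset P).erase (jpos P)).card : ℤ) := by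
      have hval : ∀ k ∈ (Tset P).erase (jpos P), v (canon P) k = 1 := by
        intro k hk
        have hk' := Finset.mem_of_mem_erase hk
        exact v_canon_uncov_ne (mem_Tset.mp hk').1 (mem_Tset.mp hk').2
          (Finset.ne_of_mem_erase hk)
      rw [Finset.sum_congr rfl hval]
      simp
    rw [herase, Finset.card_erase_of_mem hjmem]
    rw [v_canon_uncov_j (jpos_lt hne) (mem_Tset.mp hjmem).2 rfl]
    simp [tnum]
  · rw [if_neg hjlt]
    have hval : ∀ k ∈ F, v (canon P) k = 1 := by
      intro k hk
      have hkF := hk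
      rw [hF, Finset.mem_filter, Finset.mem_range] at hkF
      have hkj : k ≠ jpos P := by omega
      exact v_canon_uncov_ne (mem_Tset.mp (hsubT k hk)).1 hkF.2 hkj
    rw [Finset.sum_congr rfl hval]
    simp

lemma hgt_canon_nonneg {P : List Step} (hP : InE P) (i : ℕ) : 0 ≤ hgt (canon P) i := by
  rcases le_or_gt i P.length with hi | hi
  swap
  · rw [hgt_stab (canon P) (by rw [length_canon]; omega)]
    rw [length_canon, hgt_canon_eq hP (le_refl _) (not_pocc_length P)]
    split <;> simp
  by_cases hni : 0 < i ∧ occ P (i - 1)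
  · obtain ⟨h0, hocc⟩ := hni
    obtain ⟨p, rfl⟩ : ∃ p, i = p + 1 := ⟨i - 1, by omega⟩
    simp only [Nat.add_sub_cancel] at hocc
    rw [hgt_succ]
    have hvp : v (canon P) p = 1 := by
      unfold v
      rw [canon_get P (by have := occ_lt hocc; omega), canonF_occ hocc]
      rfl
    have hprev : 0 ≤ hgt (canon P) p := by
      rw [hgt_canon_eq hP (by omega) (pocc_disj hocc)]
      split <;> simp
    omega
  · rw [hgt_canon_eq hP hi hni]
    split <;> simp

lemma hgt_canon_length {P : List Step} (hP : InE P) :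
    hgt (canon P) (canon P).length = 0 := by
  rw [length_canon, hgt_canon_eq hP (le_refl _) (not_pocc_length P)]
  by_cases hne : (Tset P).Nonempty
  · rw [if_pos (jpos_lt hne)]
  · rw [Finset.not_nonempty_iff_eq_empty] at hne
    have hj : jpos P = P.length := by rw [jpos, dif_neg (by rw [hne]; simp)]
    rw [if_neg (by omega)]
    have : (Finset.range P.length).filter (fun k => ¬ cov P k) = (∅ : Finset ℕ) := hne
    rw [this]
    simp

lemma InE_canon {P : List Step} (hP : InE P) : InE (canon P) := by
  refine ⟨hgt_canon_nonneg hP, hgt_canon_length hP, ?_⟩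
  intro i k hik
  have hi : i < P.length := by
    have := (List.getElem?_eq_some_iff.mp hik).1
    rwa [length_canon] at this
  rw [canon_get P hi] at hik
  have hC : canonF P i = Step.C k := Option.some.inj hik
  -- identify the branch
  by_cases ho : occ P i
  · rw [canonF_occ ho] at hC; simp at hC
  by_cases hp : 0 < i ∧ occ P (i - 1)
  · rw [canonF_pocc hp.1 hp.2] at hC; simp at hC
  have hcov : ¬ cov P i := by rintro (h | h) <;> [exact ho h; exact hp h]
  by_cases hj : i = jpos P
  swap
  · rw [canonF_uncov_ne hcov hj] at hC; simp at hC
  rw [canonF_uncov_j hcov hj] at hC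
  obtain ⟨hs1, hk⟩ := cfin_eq_C hC
  have hmem : i ∈ Tset P := mem_Tset.mpr ⟨hi, hcov⟩
  have htpos : 1 ≤ tnum P := Finset.card_pos.mpr ⟨i, hmem⟩
  have htne := tnum_ne_one hP
  have hk2 : 2 ≤ k := by
    rw [hk]
    omega
  refine ⟨hk2, ?_⟩
  rw [hgt_canon_eq hP (by omega) hp, if_neg (by omega)]
  have hFer : (Finset.range i).filter (fun k => ¬ cov P k) = (Tset P).erase i := by
    ext q
    rw [Finset.mem_filter, Finset.mem_range, Finset.mem_erase, mem_Tset]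
    constructor
    · rintro ⟨hq, hqc⟩
      exact ⟨by omega, by omega, hqc⟩
    · rintro ⟨hq, hql, hqc⟩
      have : q ≤ jpos P := le_jpos (mem_Tset.mpr ⟨hql, hqc⟩)
      exact ⟨by omega, hqc⟩
  rw [hFer, Finset.card_erase_of_mem hmem]
  rw [hk]
  have : tnum P = (Tset P).card := rfl
  omega

end AuxProof5
section AuxProof6

lemma hgt_canon_at_j {P : List Step} (hP : InE P) (hne : (Tset P).Nonempty) :
    hgt (canon P) (jpos P) = ((tnum P - 1 : ℕ) : ℤ) := by
  have hjmem := jpos_mem hne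
  have huncov := (mem_Tset.mp hjmem).2
  have hp : ¬ (0 < jpos P ∧ occ P (jpos P - 1)) := fun h => huncov (Or.inr h)
  rw [hgt_canon_eq hP (le_of_lt (jpos_lt hne)) hp, if_neg (by omega)]
  have hFer : (Finset.range (jpos P)).filter (fun k => ¬ cov P k) = (Tset P).erase (jpos P) := by
    ext q
    rw [Finset.mem_filter, Finset.mem_range, Finset.mem_erase, mem_Tset]
    constructor
    · rintro ⟨hq, hqc⟩
      have := jpos_lt hne
      exact ⟨by omega, by omega, hqc⟩
    · rintro ⟨hq, hql, hqc⟩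
      have : q ≤ jpos P := le_jpos (mem_Tset.mpr ⟨hql, hqc⟩)
      exact ⟨by omega, hqc⟩
  rw [hFer, Finset.card_erase_of_mem hjmem]
  rfl

lemma InG_canon {P : List Step} (hP : InE P) : InG (canon P) := by
  by_cases hne : (Tset P).Nonempty
  swap
  · -- no uncovered positions : canon P is a pure (UD)^k
    rw [Finset.not_nonempty_iff_eq_empty] at hne
    have hall : ∀ i, 0 ≤ i → i < (canon P).length → cov (canon P) i := by
      intro i _ hi
      rw [length_canon] at hi
      rw [← cov_canon hP]
      by_contra hc
      have : i ∈ Tset P := mem_Tset.mpr ⟨hi, hc⟩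
      rw [hne] at this
      simp at this
    obtain ⟨m, hm⟩ := allcov_drop (canon P).length (canon P) 0 (by omega) hall (by omega)
    rw [List.drop_zero] at hm
    exact Or.inl ⟨m, hm⟩
  -- main case
  have hj := jpos_lt hne
  have htpos : 1 ≤ tnum P := Finset.card_pos.mpr hne
  have ht2 : 2 ≤ tnum P := by have := tnum_ne_one hP; omega
  set n := P.length with hn
  set j := jpos P with hjdef
  set R2 := (canon P).take j with hR2
  have hlenR2 : R2.length = j := by
    rw [hR2, List.length_take, length_canon]
    omega
  have hjuncov : ¬ cov P j := (mem_Tset.mp (jpos_mem hne)).2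
  -- hypothesis of the decomposition lemma
  have h1 : ∀ i, i < R2.length → ¬ cov R2 i → R2[i]? = some Step.U := by
    intro i hi hic
    rw [hlenR2] at hi
    have hgetR2 : ∀ m, m < j → R2[m]? = (canon P)[m]? := by
      intro m hm
      rw [hR2, List.getElem?_take, if_pos hm]
    have hcovPi : ¬ cov P i := by
      rintro (h | ⟨h0, h⟩)
      · rcases Nat.lt_or_ge (i+1) j with hlt | hge
        · exact hic (Or.inl ⟨by rw [hgetR2 i hi]; exact ((occ_canon hP i).mp h).1,
            by rw [hgetR2 (i+1) hlt]; exact ((occ_canon hP i).mp h).2⟩)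
        · have : i + 1 = j := by omega
          exact hjuncov (Or.inr ⟨by omega, by rw [← this]; simpa using h⟩)
      · refine hic (Or.inr ⟨h0, ?_⟩)
        have hcan := (occ_canon hP (i-1)).mp h
        have hlt : i - 1 + 1 = i := by omega
        constructor
        · rw [hgetR2 (i-1) (by omega)]; exact hcan.1
        · rw [hlt, hgetR2 i hi]
          have h2 := hcan.2
          rwa [hlt] at h2
    rw [hgetR2 i hi, canon_get P (by omega), canonF_uncov_ne hcovPi (by omega)]
  obtain ⟨l0, mids, kr1, hm, hR2eq⟩ := Wprime R2.length R2 (le_refl _) h1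
  -- the suffix after position j
  have hjget : (canon P)[j]? = some (cfin (tnum P - 1)) := by
    rw [canon_get P (by omega), canonF_uncov_j hjuncov rfl]
  have hdropj1 : ∃ m, (canon P).drop (j + 1) = UDpow m := by
    refine allcov_drop (canon P).length (canon P) (j+1) (by omega) ?_ ?_
    · intro i hi hilen
      rw [← cov_canon hP]
      by_contra hc
      have : i ∈ Tset P := mem_Tset.mpr ⟨by rwa [length_canon] at hilen, hc⟩
      have := le_jpos this
      omega
    · rintro ⟨-, hocc⟩
      simp only [Nat.add_sub_cancel] at hocc
      exact hjuncov (Or.inl ((occ_canon hP j).mpr hocc))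
  obtain ⟨m, hdrop⟩ := hdropj1
  have hcanon_split : canon P = R2 ++ (cfin (tnum P - 1) :: UDpow m) := by
    rw [hR2, ← hdrop, ← cons_drop hjget]
    exact (List.take_append_drop j (canon P)).symm
  -- the height identity giving  Σ mids + kr1 = tnum - 1
  have hsum : (((mids.map (fun t => (t.1 : ℤ))).sum) + kr1 : ℤ) = ((tnum P - 1 : ℕ) : ℤ) := by
    have h1' : hgt (canon P) j = ((R2.map Step.val).sum) := by
      rw [hgt, hR2]
    have h2' : ((R2.map Step.val).sum) = ((mids.map (fun t => (t.1 : ℤ))).sum) + kr1 := by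
      rw [hR2eq]
      rw [List.map_append, List.sum_append, List.map_append, List.sum_append]
      rw [vsum_UDpow, vsum_blocks, vsum_Upow]
      ring
    rw [← h2', ← h1', hjdef, hgt_canon_at_j hP hne]
  cases mids with
  | nil =>
      -- form (ii)
      have hkr1 : kr1 = tnum P - 1 := by
        simp at hsum
        exact_mod_cast hsum
      have hs2 : 2 ≤ tnum P - 1 := by
        by_contra hlt
        have hs1 : tnum P - 1 = 1 := by omega
        -- then kr1 = 1 and there is an occurrence at j-1, contradiction
        have hkr11 : kr1 = 1 := by omega
        have hR2' : R2 = UDpow l0 ++ [Step.U] := by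
          rw [hR2eq, hkr11]
          simp [Upow]
        have hocc : occ (canon P) (2 * l0) := by
          have hc : canon P = UDpow l0 ++ ([Step.U] ++ (Step.D :: UDpow m)) := by
            rw [hcanon_split, hR2', hs1]
            simp [cfin, List.append_assoc]
          constructor
          · rw [hc, List.getElem?_append_right (by rw [length_UDpow])]
            rw [length_UDpow]
            simp
          · rw [hc, List.getElem?_append_right (by rw [length_UDpow]; omega)]
            rw [length_UDpow]
            have : 2 * l0 + 1 - 2 * l0 = 1 := by omega
            rw [this]
            simp
        have hoccP := (occ_canon hP (2*l0)).mpr hocc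
        have hjval : j = 2 * l0 + 1 := by
          have := hlenR2
          rw [hR2'] at this
          simp [length_UDpow] at this
          omega
        exact hjuncov (Or.inr ⟨by omega, by rw [hjval]; simpa using hoccP⟩)
      refine Or.inr (Or.inl ⟨l0, tnum P - 1, m, hs2, ?_⟩)
      have hcfin : cfin (tnum P - 1) = Step.C (tnum P - 1) := by
        unfold cfin
        rw [if_neg (by omega)]
      rw [hcanon_split, hcfin, hR2eq, hkr1]
      simp [List.append_assoc]
  | cons a rest =>
      refine Or.inr (Or.inr ⟨l0, a :: rest, kr1, tnum P - 1, m, by simp, hm, by omega, ?_⟩)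
      rw [hcanon_split, hR2eq]
      simp [List.append_assoc]

end AuxProof6
section AuxProof7

lemma InG_shape {R : List Step} (hG : InG R) :
    (∀ i, i < R.length → cov R i) ∨
    ∃ p0 s0, 1 ≤ s0 ∧ R[p0]? = some (cfin s0) ∧
      (∀ i, i < R.length → i ≠ p0 → (R[i]? = some Step.U ∨ cov R i)) ∧
      (∀ i, p0 < i → i < R.length → cov R i) := by
  rcases hG with ⟨k, hk⟩ | ⟨l, k, m, hk2, heq⟩ | ⟨l0, mids, kr1, s, lr1, hne, hmids, hs, heq⟩
  · left
    intro i hi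
    rw [hk] at hi ⊢
    rw [length_UDpow] at hi
    have := cov_of_UDpow k [] [] i (by simp) (by simp; omega)
    simpa using this
  · -- form (ii)
    right
    refine ⟨2 * l + k, k, by omega, ?_, ?_, ?_⟩
    · have hR' : R = (UDpow l ++ Upow k) ++ ([Step.C k] ++ UDpow m) := by
        rw [heq]; simp [List.append_assoc]
      rw [hR']
      have hlen : (UDpow l ++ Upow k).length = 2 * l + k := by
        simp [length_UDpow, length_Upow]
      rw [← hlen]
      have := getElem_mid (UDpow l ++ Upow k) (UDpow m) (Step.C k)
      rw [this]
      have : cfin k = Step.C k := by unfold cfin; rw [if_neg (by omega)]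
      rw [this]
    · intro i hi hip
      have hlen : R.length = 2 * l + k + 1 + 2 * m := by
        rw [heq]; simp [length_UDpow, length_Upow]; omega
      rcases Nat.lt_or_ge i (2 * l) with h | h
      · right
        have hR' : R = [] ++ (UDpow l ++ (Upow k ++ [Step.C k] ++ UDpow m)) := by
          rw [heq]; simp [List.append_assoc]
        rw [hR']
        exact cov_of_UDpow l [] _ i (by simp) (by simp; omega)
      · rcases Nat.lt_or_ge i (2 * l + k) with h' | h'
        · left
          have hR' : R = UDpow l ++ (Upow k ++ ([Step.C k] ++ UDpow m)) := by
            rw [heq]; simp [List.append_assoc]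
          rw [hR']
          exact getElem_Upow (UDpow l) _ k i (by rw [length_UDpow]; omega)
            (by rw [length_UDpow]; omega)
        · right
          have hip' : 2 * l + k + 1 ≤ i := by omega
          have hR' : R = (UDpow l ++ Upow k ++ [Step.C k]) ++ (UDpow m ++ []) := by
            rw [heq]; simp [List.append_assoc]
          rw [hR']
          refine cov_of_UDpow m _ [] i ?_ ?_ <;>
            simp [length_UDpow, length_Upow] <;> omega
    · intro i hp0 hi
      have hlen : R.length = 2 * l + k + 1 + 2 * m := by
        rw [heq]; simp [length_UDpow, length_Upow]; omega
      have hR' : R = (UDpow l ++ Upow k ++ [Step.C k]) ++ (UDpow m ++ []) := by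
        rw [heq]; simp [List.append_assoc]
      rw [hR']
      refine cov_of_UDpow m _ [] i ?_ ?_ <;>
        simp [length_UDpow, length_Upow] <;> omega
  · -- form (iii)
    right
    set flat := (mids.map (fun t => Upow t.1 ++ UDpow t.2)).flatten with hflat
    refine ⟨2 * l0 + flat.length + kr1, s, hs, ?_, ?_, ?_⟩
    · have hR' : R = (UDpow l0 ++ flat ++ Upow kr1) ++ ([cfin s] ++ UDpow lr1) := by
        rw [heq]; simp [List.append_assoc]
      rw [hR']
      have hlen : (UDpow l0 ++ flat ++ Upow kr1).length = 2 * l0 + flat.length + kr1 := by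
        simp [length_UDpow, length_Upow]; omega
      rw [← hlen]
      exact getElem_mid _ _ _
    · intro i hi hip
      have hlen : R.length = 2 * l0 + flat.length + kr1 + 1 + 2 * lr1 := by
        rw [heq]; simp [length_UDpow, length_Upow]; omega
      rcases Nat.lt_or_ge i (2 * l0) with h | h
      · right
        have hR' : R = [] ++ (UDpow l0 ++ (flat ++ (Upow kr1 ++ [cfin s] ++ UDpow lr1))) := by
          rw [heq]; simp [List.append_assoc]
        rw [hR']
        exact cov_of_UDpow l0 [] _ i (by simp) (by simp; omega)
      · rcases Nat.lt_or_ge i (2 * l0 + flat.length) with h' | h'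
        · have hR' : R = UDpow l0 ++ (flat ++ (Upow kr1 ++ [cfin s] ++ UDpow lr1)) := by
            rw [heq]; simp [List.append_assoc]
          rw [hR']
          exact shape_mids mids (UDpow l0) _ i (by rw [length_UDpow]; omega)
            (by rw [length_UDpow, ← hflat]; omega)
        · rcases Nat.lt_or_ge i (2 * l0 + flat.length + kr1) with h'' | h'' 
          · left
            have hR' : R = (UDpow l0 ++ flat) ++ (Upow kr1 ++ ([cfin s] ++ UDpow lr1)) := by
              rw [heq]; simp [List.append_assoc]
            rw [hR']
            refine getElem_Upow _ _ kr1 i ?_ ?_ <;> simp [length_UDpow] <;> omega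
          · right
            have hip' : 2 * l0 + flat.length + kr1 + 1 ≤ i := by omega
            have hR' : R = (UDpow l0 ++ flat ++ Upow kr1 ++ [cfin s]) ++ (UDpow lr1 ++ []) := by
              rw [heq]; simp [List.append_assoc]
            rw [hR']
            refine cov_of_UDpow lr1 _ [] i ?_ ?_ <;>
              simp [length_UDpow, length_Upow] <;> omega
    · intro i hp0 hi
      have hlen : R.length = 2 * l0 + flat.length + kr1 + 1 + 2 * lr1 := by
        rw [heq]; simp [length_UDpow, length_Upow]; omega
      have hR' : R = (UDpow l0 ++ flat ++ Upow kr1 ++ [cfin s]) ++ (UDpow lr1 ++ []) := by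
        rw [heq]; simp [List.append_assoc]
      rw [hR']
      refine cov_of_UDpow lr1 _ [] i ?_ ?_ <;>
        simp [length_UDpow, length_Upow] <;> omega

end AuxProof7
section AuxProof8

lemma canon_unique {P R : List Step} (hP : InE P) (hRE : InE R) (hRG : InG R)
    (hlen : R.length = P.length) (heq : ∀ i, occ P i ↔ occ R i) : R = canon P := by
  have hcov : ∀ i, cov P i ↔ cov R i := by
    intro i
    unfold cov
    constructor
    · rintro (h | ⟨h0, h⟩)
      · exact Or.inl ((heq i).mp h)
      · exact Or.inr ⟨h0, (heq _).mp h⟩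
    · rintro (h | ⟨h0, h⟩)
      · exact Or.inl ((heq i).mpr h)
      · exact Or.inr ⟨h0, (heq _).mpr h⟩
  have hTset : Tset R = Tset P := by
    unfold Tset
    rw [hlen]
    exact Finset.filter_congr (fun k _ => by rw [hcov k])
  have hsum0 : ∑ k ∈ Tset P, v R k = 0 := by
    rw [← hTset, ← hgt_length_eq_sum]
    exact hRE.2.1
  apply List.ext_getElem?
  intro i
  rcases Nat.lt_or_ge i P.length with hi | hi
  swap
  · rw [List.getElem?_eq_none (by omega : R.length ≤ i),
      List.getElem?_eq_none (by rw [length_canon]; omega)]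
  rw [canon_get P hi]
  by_cases ho : occ P i
  · rw [((heq i).mp ho).1, canonF_occ ho]
  by_cases hp : 0 < i ∧ occ P (i - 1)
  · have hoR := (heq _).mp hp.2
    have h2 := hoR.2
    have hi1 : i - 1 + 1 = i := by omega
    rw [hi1] at h2
    rw [h2, canonF_pocc hp.1 hp.2]
  -- uncovered case
  have hcovi : ¬ cov P i := by rintro (h | h); exacts [ho h, hp h]
  have hiT : i ∈ Tset P := mem_Tset.mpr ⟨hi, hcovi⟩
  rcases InG_shape hRG with hall | ⟨p0, s0, hs0, hp0get, hother, hafter⟩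
  · exact absurd ((hcov i).mpr (hall i (by omega))) hcovi
  · have hp0lt : p0 < R.length := (List.getElem?_eq_some_iff.mp hp0get).1
    have hp0uncov : ¬ cov R p0 := by
      intro hc
      have hvals : ∀ k ∈ Tset P, v R k = 1 := by
        intro k hk
        have hkR : k ∈ Tset R := by rw [hTset]; exact hk
        obtain ⟨hklt, hkc⟩ := mem_Tset.mp hkR
        have hkp : k ≠ p0 := fun h => hkc (h ▸ hc)
        rcases hother k hklt hkp with h | h
        · unfold v; rw [h]; rfl
        · exact absurd h hkc
      rw [Finset.sum_congr rfl hvals] at hsum0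
      simp at hsum0
      rw [hsum0] at hiT
      simp at hiT
    have hp0uncovP : ¬ cov P p0 := fun h => hp0uncov ((hcov p0).mp h)
    have hp0T : p0 ∈ Tset P := mem_Tset.mpr ⟨by omega, hp0uncovP⟩
    have hmax : ∀ k ∈ Tset P, k ≤ p0 := by
      intro k hk
      by_contra hgt'
      have hkR : k ∈ Tset R := by rw [hTset]; exact hk
      obtain ⟨hklt, hkc⟩ := mem_Tset.mp hkR
      exact hkc (hafter k (by omega) hklt)
    have hp0j : p0 = jpos P :=
      le_antisymm (le_jpos hp0T) (hmax _ (jpos_mem ⟨p0, hp0T⟩))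
    -- compute s0
    have hsplit : v R p0 + ∑ k ∈ (Tset P).erase p0, v R k = 0 := by
      rw [Finset.add_sum_erase _ _ hp0T]
      exact hsum0
    have hvp0 : v R p0 = -(s0 : ℤ) := by
      unfold v; rw [hp0get]; simp [val_cfin]
    have herase : ∑ k ∈ (Tset P).erase p0, v R k = (((Tset P).erase p0).card : ℤ) := by
      have hvals : ∀ k ∈ (Tset P).erase p0, v R k = 1 := by
        intro k hk
        have hk' := Finset.mem_of_mem_erase hk
        have hkR : k ∈ Tset R := by rw [hTset]; exact hk'
        obtain ⟨hklt, hkc⟩ := mem_Tset.mp hkR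
        rcases hother k hklt (Finset.ne_of_mem_erase hk) with h | h
        · unfold v; rw [h]; rfl
        · exact absurd h hkc
      rw [Finset.sum_congr rfl hvals]
      simp
    rw [hvp0, herase, Finset.card_erase_of_mem hp0T] at hsplit
    have htpos : 1 ≤ (Tset P).card := Finset.card_pos.mpr ⟨i, hiT⟩
    have hs0val : s0 = tnum P - 1 := by
      unfold tnum
      omega
    by_cases hij : i = p0
    · rw [← hij] at hp0get
      rw [hp0get, canonF_uncov_j hcovi (hij.trans hp0j), hs0val]
    · rcases hother i (by omega) hij with h | h
      · rw [h, canonF_uncov_ne hcovi (fun hh => hij (hh.trans hp0j.symm))]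
      · exact absurd ((hcov i).mpr h) hcovi

end AuxProof8

/-- 𝒢 is a complete set of representatives of the UD-equivalence classes of ℰ. -/
theorem G_complete_set_of_representatives_for_UDEquiv (P : List Step) (hP : InE P) :
    ∃! Q : List Step, (InE Q ∧ InG Q) ∧ Q.length = P.length ∧ UDEquiv P Q := by
  refine ⟨canon P, ⟨⟨InE_canon hP, InG_canon hP⟩, length_canon P, fun i => occ_canon hP i⟩, ?_⟩
  rintro y ⟨⟨hyE, hyG⟩, hylen, hyequiv⟩
  exact canon_unique hP hyE hyG hylen (fun i => hyequiv i)
end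

section
/- Let g_n denote the number of UD-equivalence classes of paths of length n in ℰ. Then g_0 = 1, g_1 = 0, g_2 = 1, g_3 = 1, g_4 = 3, and g_n = 2g_{n−1} + g_{n−2} − 3g_{n−3} + g_{n−5} for all n ≥ 5. -/
/-- The number of equivalence classes, for the equivalence `E`, of paths of
length `n` in ℰ. -/
noncomputable def nClasses (E : List Step → List Step → Prop) (n : ℕ) : ℕ :=
  Nat.card (Quot (fun P Q : {P : List Step // InE P ∧ P.length = n} => E P.1 Q.1))

/-- occurrence vector of UD pattern -/
def ov : List Step → List Bool
  | [] => []
  | s :: P => (decide (s = Step.U ∧ P.head? = some Step.D)) :: ov P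

@[simp] lemma ov_nil : ov [] = [] := rfl
@[simp] lemma ov_cons (s P) : ov (s :: P) = (decide (s = Step.U ∧ P.head? = some Step.D)) :: ov P := rfl
@[simp] lemma ov_length (P : List Step) : (ov P).length = P.length := by
  induction P with
  | nil => rfl
  | cons s P ih => simp [ih]

lemma ov_getElem? (P : List Step) (i : ℕ) (h : i < P.length) :
    (ov P)[i]? = some (decide (P[i]? = some Step.U ∧ P[i+1]? = some Step.D)) := by
  induction P generalizing i with
  | nil => simp at h
  | cons s P ih =>
    cases i with
    | zero =>
      simp only [ov_cons, List.getElem?_cons_zero, List.getElem?_cons_succ]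
      congr 1
      apply decide_eq_decide.2
      constructor
      · rintro ⟨rfl, h2⟩
        exact ⟨rfl, by rwa [← List.head?_eq_getElem?]⟩
      · rintro ⟨h1, h2⟩
        exact ⟨by simpa using h1, by rw [List.head?_eq_getElem?]; exact h2⟩
    | succ i =>
      simp only [ov_cons, List.getElem?_cons_succ]
      exact ih i (by simpa using h)

lemma ov_eq_iff {P Q : List Step} (hl : P.length = Q.length)
    : ov P = ov Q ↔ ∀ i : ℕ, (P[i]? = some Step.U ∧ P[i + 1]? = some Step.D) ↔
      (Q[i]? = some Step.U ∧ Q[i + 1]? = some Step.D) := by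
  constructor
  · intro h i
    by_cases hi : i < P.length
    · have h1 := ov_getElem? P i hi
      have h2 := ov_getElem? Q i (hl ▸ hi)
      rw [h] at h1
      exact decide_eq_decide.1 (Option.some_injective _ (h1.symm.trans h2))
    · push_neg at hi
      constructor
      · rintro ⟨h1, -⟩
        rw [List.getElem?_eq_none (by omega)] at h1; exact absurd h1 (by simp)
      · rintro ⟨h1, -⟩
        rw [List.getElem?_eq_none (by omega : Q.length ≤ i)] at h1; exact absurd h1 (by simp)
  · intro h
    apply List.ext_getElem?
    intro i
    by_cases hi : i < P.length
    · rw [ov_getElem? P i hi, ov_getElem? Q i (hl ▸ hi)]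
      exact congrArg some (decide_eq_decide.2 (h i))
    · rw [List.getElem?_eq_none, List.getElem?_eq_none] <;> simp [hl] <;> omega

@[simp] lemma hgt_zero (P : List Step) : hgt P 0 = 0 := rfl
@[simp] lemma hgt_nil (i : ℕ) : hgt [] i = 0 := by simp [hgt]
lemma hgt_cons (s : Step) (P : List Step) (i : ℕ) :
    hgt (s :: P) (i + 1) = s.val + hgt P i := by simp [hgt]

/-- validity of a path started at height `h`. -/
def Valid (h : ℤ) (P : List Step) : Prop :=
  (∀ i, 0 ≤ h + hgt P i) ∧ (h + hgt P P.length = 0) ∧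
    ∀ i k, P[i]? = some (Step.C k) → 2 ≤ k ∧ h + hgt P i = (k : ℤ)

lemma InE_iff_valid (P : List Step) : InE P ↔ Valid 0 P := by
  simp [InE, Valid]

lemma valid_nil : Valid 0 [] := by
  refine ⟨by simp, by simp, by simp⟩

lemma valid_cons {h : ℤ} {s : Step} {P : List Step}
    (hs : ∀ k, s = Step.C k → 2 ≤ k ∧ h = (k : ℤ)) (h0 : 0 ≤ h)
    (hv : Valid (h + s.val) P) : Valid h (s :: P) := by
  obtain ⟨v1, v2, v3⟩ := hv
  refine ⟨?_, ?_, ?_⟩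
  · intro i
    cases i with
    | zero => simpa using h0
    | succ i => rw [hgt_cons]; have := v1 i; omega
  · simp only [List.length_cons, hgt_cons]; have := v2; omega
  · intro i k hk
    cases i with
    | zero =>
      simp only [List.getElem?_cons_zero, Option.some_inj] at hk
      simpa using hs k hk
    | succ i =>
      simp only [List.getElem?_cons_succ] at hk
      have := v3 i k hk
      rw [hgt_cons]; omega

/-- decode a tiling word (true = domino = UD-occurrence, false = monomer)
into the occurrence vector. -/
def dec : List Bool → List Bool
  | [] => []
  | false :: w => false :: dec w
  | true :: w => true :: false :: dec w

@[simp] lemma dec_nil : dec [] = [] := rfl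
@[simp] lemma dec_false (w) : dec (false :: w) = false :: dec w := rfl
@[simp] lemma dec_true (w) : dec (true :: w) = true :: false :: dec w := rfl

def hasFF : List Bool → Bool
  | [] => false
  | [_] => false
  | a :: b :: w => (!a && !b) || hasFF (b :: w)

@[simp] lemma hasFF_nil : hasFF [] = false := rfl
@[simp] lemma hasFF_singleton (a) : hasFF [a] = false := rfl
@[simp] lemma hasFF_cons_cons (a b w) :
    hasFF (a :: b :: w) = ((!a && !b) || hasFF (b :: w)) := rfl
@[simp] lemma hasFF_cons_true (w) : hasFF (true :: w) = hasFF w := by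
  cases w <;> simp

/-- build a canonical path from a tiling word; `h` = number of monomers already seen. -/
def buildP : List Bool → ℕ → List Step
  | [], _ => []
  | true :: w, h => Step.U :: Step.D :: buildP w h
  | false :: w, h =>
      if w.count false = 0 then cfin h :: buildP w 0 else Step.U :: buildP w (h + 1)

/-- the invariant needed for the construction to be valid and correct. -/
def BInv (h : ℕ) (w : List Bool) : Prop :=
  (w.count false = 0 → h = 0) ∧ (w.count false = 1 → 1 ≤ h) ∧
    (w.count false = 2 → h = 0 → hasFF w = false)

lemma buildP_length (w : List Bool) (h : ℕ) :
    (buildP w h).length = (dec w).length := by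
  induction w generalizing h with
  | nil => rfl
  | cons a w ih =>
    cases a with
    | false =>
      by_cases hc : w.count false = 0 <;> simp [buildP, hc, ih]
    | true => simp [buildP, ih]

lemma buildP_valid (w : List Bool) (h : ℕ) (hI : BInv h w) : Valid (h : ℤ) (buildP w h) := by
  induction w generalizing h with
  | nil =>
    have h0 : h = 0 := hI.1 (by simp)
    subst h0; exact_mod_cast valid_nil
  | cons a w ih =>
    obtain ⟨I1, I2, I3⟩ := hI
    cases a with
    | true =>
      show Valid _ (Step.U :: Step.D :: buildP w h)
      apply valid_cons (by simp [Step.val]) (by positivity)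
      apply valid_cons (by simp [Step.val]) (by simp [Step.val]; positivity)
      have : (h : ℤ) + Step.val Step.U + Step.val Step.D = (h : ℤ) := by
        simp [Step.val]
      rw [this]
      apply ih
      refine ⟨by simpa using I1, by simpa using I2, fun hc h0 => ?_⟩
      have := I3 (by simpa using hc) h0
      simpa using this
    | false =>
      by_cases hc : w.count false = 0
      · have hcnt : (false :: w).count false = 1 := by simp [hc]
        have h1 : 1 ≤ h := I2 hcnt
        show Valid _ (if w.count false = 0 then cfin h :: buildP w 0 else _)
        rw [if_pos hc]
        have hv0 : Valid 0 (buildP w 0) := by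
          apply ih; exact ⟨fun _ => rfl, fun h1 => by omega, fun h2 => by omega⟩
        rcases eq_or_lt_of_le h1 with h1 | h2
        · have : cfin h = Step.D := by simp [cfin, ← h1]
          rw [this]
          apply valid_cons (by simp) (by positivity)
          have : (h : ℤ) + Step.val Step.D = 0 := by simp [Step.val, ← h1]
          rwa [this]
        · have : cfin h = Step.C h := by simp [cfin]; omega
          rw [this]
          apply valid_cons ?_ (by positivity)
          · have : (h : ℤ) + Step.val (Step.C h) = 0 := by simp [Step.val]
            rwa [this]
          · rintro k hk
            injection hk with hk
            subst hk
            exact ⟨by omega, rfl⟩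
      · show Valid _ (if w.count false = 0 then _ else Step.U :: buildP w (h + 1))
        rw [if_neg hc]
        apply valid_cons (by simp [Step.val]) (by positivity)
        have : (h : ℤ) + Step.val Step.U = ((h + 1 : ℕ) : ℤ) := by
          simp [Step.val]
        rw [this]
        apply ih
        refine ⟨fun h0 => absurd h0 hc, fun _ => by omega, fun hc2 h0 => by omega⟩

lemma buildP_ov (w : List Bool) (h : ℕ) (hI : BInv h w) : ov (buildP w h) = dec w := by
  induction w generalizing h with
  | nil => rfl
  | cons a w ih =>
    obtain ⟨I1, I2, I3⟩ := hI
    cases a with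
    | true =>
      show ov (Step.U :: Step.D :: buildP w h) = _
      rw [ov_cons, ov_cons]
      have hw : ov (buildP w h) = dec w := by
        apply ih
        refine ⟨by simpa using I1, by simpa using I2, fun hc h0 => ?_⟩
        simpa using I3 (by simpa using hc) h0
      simp [hw]
    | false =>
      by_cases hc : w.count false = 0
      · show ov (if w.count false = 0 then cfin h :: buildP w 0 else _) = _
        rw [if_pos hc, ov_cons]
        have hw : ov (buildP w 0) = dec w := by
          apply ih; exact ⟨fun _ => rfl, fun h1 => by omega, fun h2 => by omega⟩
        have : cfin h ≠ Step.U := by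
          simp only [cfin]; split <;> simp
        simp [hw, this]
      · show ov (if w.count false = 0 then _ else Step.U :: buildP w (h + 1)) = _
        rw [if_neg hc, ov_cons]
        have hw : ov (buildP w (h + 1)) = dec w := by
          apply ih
          exact ⟨fun h0 => absurd h0 hc, fun _ => by omega, fun hc2 h0 => by omega⟩
        have hhead : (buildP w (h + 1)).head? ≠ some Step.D := by
          match w with
          | [] => simp [buildP]
          | true :: w₂ => simp [buildP]
          | false :: w₂ =>
            by_cases hc2 : w₂.count false = 0
            · have hcnt : (false :: false :: w₂).count false = 2 := by simp [hc2]
              have hh : ¬ (h = 0) := fun h0 => by simpa using I3 hcnt h0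
              have : cfin (h + 1) = Step.C (h + 1) := by simp [cfin]; omega
              simp [buildP, hc2, this]
            · simp [buildP, hc2]
        simp only [dec_false, hw, List.cons.injEq, and_true]
        simp only [decide_eq_false_iff_not]
        rintro ⟨-, hD⟩
        exact hhead hD

/-- the set of monomer–domino tilings of a strip of length `n`. -/
def Tl : ℕ → Finset (List Bool)
  | 0 => {[]}
  | 1 => {[false]}
  | n + 2 => ((Tl (n + 1)).image (List.cons false)) ∪ ((Tl n).image (List.cons true))

@[simp] lemma mem_Tl_zero {w : List Bool} : w ∈ Tl 0 ↔ w = [] := by simp [Tl]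
@[simp] lemma mem_Tl_one {w : List Bool} : w ∈ Tl 1 ↔ w = [false] := by simp [Tl]
lemma mem_Tl_two {n : ℕ} {w : List Bool} : w ∈ Tl (n + 2) ↔
    (∃ w', w' ∈ Tl (n + 1) ∧ w = false :: w') ∨ (∃ w', w' ∈ Tl n ∧ w = true :: w') := by
  simp [Tl, eq_comm]

lemma mem_Tl_false {n : ℕ} {w : List Bool} (h : w ∈ Tl n) : false :: w ∈ Tl (n + 1) := by
  cases n with
  | zero => simp at h; simp [h]
  | succ n => exact mem_Tl_two.2 (Or.inl ⟨w, h, rfl⟩)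

lemma mem_Tl_true {n : ℕ} {w : List Bool} (h : w ∈ Tl n) : true :: w ∈ Tl (n + 2) :=
  mem_Tl_two.2 (Or.inr ⟨w, h, rfl⟩)

lemma dec_length_mem : ∀ (n : ℕ) (w : List Bool), w ∈ Tl n → (dec w).length = n
  | 0, w, h => by simp at h; simp [h]
  | 1, w, h => by simp at h; simp [h]
  | (n + 2), w, h => by
    rcases mem_Tl_two.1 h with ⟨w', hw', rfl⟩ | ⟨w', hw', rfl⟩
    · simp [dec_length_mem (n + 1) w' hw']
    · simp [dec_length_mem n w' hw']

lemma ov_eq_true_cons {P : List Step} {L : List Bool} (h : ov P = true :: L) :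
    ∃ P'', P = Step.U :: Step.D :: P'' ∧ L = false :: ov P'' := by
  match P with
  | [] => simp at h
  | s :: Q =>
    rw [ov_cons, List.cons.injEq] at h
    obtain ⟨h1, h2⟩ := h
    rw [decide_eq_true_iff] at h1
    obtain ⟨rfl, hQ⟩ := h1
    match Q with
    | [] => simp at hQ
    | t :: P'' =>
      simp only [List.head?_cons, Option.some_inj] at hQ
      subst hQ
      refine ⟨P'', rfl, ?_⟩
      rw [← h2, ov_cons]
      simp

lemma path_tiling (P : List Step) : ∃ w, w ∈ Tl P.length ∧ dec w = ov P := by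
  generalize hn : P.length = n
  induction n using Nat.strong_induction_on generalizing P with
  | _ n ih =>
  match P with
  | [] => exact ⟨[], by simp [← hn], rfl⟩
  | s :: Q =>
    rcases hb : decide (s = Step.U ∧ Q.head? = some Step.D) with _ | _
    · have hQl : Q.length = n - 1 := by simp at hn; omega
      obtain ⟨w', hw', hd⟩ := ih (n - 1) (by simp at hn; omega) Q hQl
      refine ⟨false :: w', ?_, ?_⟩
      · have := mem_Tl_false hw'
        have : n - 1 + 1 = n := by simp at hn; omega
        rw [← this]
        exact mem_Tl_false hw'
      · rw [dec_false, hd, ov_cons, hb]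
    · have h1 := decide_eq_true_iff.1 hb
      obtain ⟨rfl, hQ⟩ := h1
      match Q with
      | [] => simp at hQ
      | t :: P'' =>
        simp only [List.head?_cons, Option.some_inj] at hQ
        subst hQ
        have hl : P''.length = n - 2 := by simp at hn; omega
        obtain ⟨w', hw', hd⟩ := ih (n - 2) (by simp at hn; omega) P'' hl
        refine ⟨true :: w', ?_, ?_⟩
        · have := mem_Tl_true hw'
          have h2 : n - 2 + 2 = n := by simp at hn; omega
          rw [← h2]
          exact mem_Tl_true hw'
        · rw [dec_true, hd, ov_cons, ov_cons]
          simp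

lemma hgt_len (P : List Step) : hgt P P.length = (P.map Step.val).sum := by
  simp [hgt]

lemma sumZero : ∀ (w : List Bool) (P : List Step), w.count false = 0 →
    ov P = dec w → (P.map Step.val).sum = 0
  | [], P, _, hov => by
    have : P = [] := by
      have := ov_length P
      rw [hov] at this
      simpa using this.symm
    simp [this]
  | true :: w', P, hc, hov => by
    rw [dec_true] at hov
    obtain ⟨P'', rfl, hL⟩ := ov_eq_true_cons hov
    have : ov P'' = dec w' := by
      rw [List.cons.injEq] at hL
      exact hL.2.symm
    have := sumZero w' P'' (by simpa using hc) this
    simp [Step.val, this]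
  | false :: w', P, hc, hov => by simp at hc

lemma InE_cons_cons {P : List Step} (h : InE (Step.U :: Step.D :: P)) : InE P := by
  obtain ⟨h1, h2, h3⟩ := h
  refine ⟨?_, ?_, ?_⟩
  · intro i
    have := h1 (i + 2)
    rw [hgt_cons, hgt_cons] at this
    simp [Step.val] at this
    linarith
  · have := h2
    simp only [List.length_cons] at this
    rw [hgt_cons, hgt_cons] at this
    simp [Step.val] at this
    omega
  · intro i k hk
    have := h3 (i + 2) k (by simpa using hk)
    rw [hgt_cons, hgt_cons] at this
    simp [Step.val] at this
    exact ⟨this.1, by omega⟩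

theorem hasFF_count : ∀ v : List Bool, hasFF v = true → 2 ≤ v.count false
  | [] => by simp
  | [a] => by simp
  | a :: b :: w => by
    intro h
    rw [hasFF_cons_cons, Bool.or_eq_true, Bool.and_eq_true] at h
    rcases h with ⟨ha, hb⟩ | h
    · simp at ha hb
      subst ha; subst hb
      simp
    · have := hasFF_count (b :: w) h
      calc 2 ≤ (b :: w).count false := this
        _ ≤ (a :: b :: w).count false := by
            by_cases hax : a = false <;> simp [hax]

/-- good tilings: not exactly one monomer, and not (exactly two monomers that are adjacent). -/
def GoodW (w : List Bool) : Prop :=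
  w.count false ≠ 1 ∧ ¬(w.count false = 2 ∧ hasFF w = true)

instance : DecidablePred GoodW := fun w => by unfold GoodW; infer_instance

theorem good_of_path : ∀ (w : List Bool) (P : List Step), InE P → ov P = dec w → GoodW w
  | [], P, _, _ => by simp [GoodW]
  | true :: w', P, hP, hov => by
    rw [dec_true] at hov
    obtain ⟨P'', rfl, hL⟩ := ov_eq_true_cons hov
    rw [List.cons.injEq] at hL
    have hrec := good_of_path w' P'' (InE_cons_cons hP) hL.2.symm
    obtain ⟨g1, g2⟩ := hrec
    constructor
    · simpa using g1
    · simpa using g2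
  | false :: w', P, hP, hov => by
    rw [dec_false] at hov
    constructor
    · intro hc1
      have hcw' : w'.count false = 0 := by simp [List.count_cons] at hc1; omega
      match P, hov with
      | [], hov => simp at hov
      | s :: Q, hov =>
        rw [ov_cons, List.cons.injEq] at hov
        obtain ⟨hd0, hQ⟩ := hov
        have hsum : (Q.map Step.val).sum = 0 := sumZero w' Q hcw' hQ
        have hlen := hP.2.1
        rw [hgt_len] at hlen
        simp only [List.map_cons, List.sum_cons, hsum, add_zero] at hlen
        cases s with
        | U => simp [Step.val] at hlen
        | D => simp [Step.val] at hlen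
        | C k =>
          have := hP.2.2 0 k (by simp)
          simp [hgt] at this
          simp [Step.val] at hlen
          omega
    · rintro ⟨hc2, hFF⟩
      have hcw' : w'.count false = 1 := by simp [List.count_cons] at hc2; omega
      match w', hcw', hFF, hov with
      | [], hcw', _, _ => simp at hcw'
      | true :: w'', hcw', hFF, hov =>
        rw [hasFF_cons_cons] at hFF
        simp only [Bool.not_false, Bool.not_true, Bool.and_false, Bool.false_or] at hFF
        have h2 := hasFF_count _ (by simpa using hFF)
        simp [List.count_cons] at hcw' h2
        omega
      | false :: w'', hcw', hFF, hov =>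
        have hcw'' : w''.count false = 0 := by simp [List.count_cons] at hcw'; omega
        rw [dec_false] at hov
        match P, hov with
        | [], hov => simp at hov
        | [s], hov => simp at hov
        | s :: t :: Q₂, hov =>
          rw [ov_cons, ov_cons, List.cons.injEq, List.cons.injEq] at hov
          obtain ⟨h0, h1, hQ⟩ := hov
          have hsum2 : (Q₂.map Step.val).sum = 0 := sumZero w'' Q₂ hcw'' hQ
          have hlen := hP.2.1
          rw [hgt_len] at hlen
          simp only [List.map_cons, List.sum_cons, hsum2, add_zero] at hlen
          have hs : s = Step.U := by
            cases s with
            | U => rfl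
            | D =>
              have := hP.1 1
              rw [hgt_cons] at this
              simp [Step.val] at this
            | C k =>
              have := hP.2.2 0 k (by simp)
              simp [hgt] at this
              omega
          subst hs
          cases t with
          | U => simp [Step.val] at hlen
          | D => simp at h0
          | C k =>
            have := hP.2.2 1 k (by simp)
            rw [hgt_cons] at this
            simp [Step.val] at this
            omega

/-- inverse of `dec`. -/
def undec : List Bool → List Bool
  | [] => []
  | false :: L => false :: undec L
  | true :: L => true :: undec L.tail
termination_by l => l.length
decreasing_by
  all_goals simp [List.length_tail]
  all_goals omega

@[simp] lemma undec_dec : ∀ w : List Bool, undec (dec w) = w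
  | [] => by simp [undec]
  | false :: w => by rw [dec_false]; rw [undec]; rw [undec_dec w]
  | true :: w => by rw [dec_true]; rw [undec]; simp [undec_dec w]

def goodTl (n : ℕ) : Finset (List Bool) := (Tl n).filter GoodW

lemma BInv_of_good {w : List Bool} (h : GoodW w) : BInv 0 w := by
  obtain ⟨g1, g2⟩ := h
  refine ⟨fun _ => rfl, fun h1 => absurd h1 g1, fun h2 _ => ?_⟩
  by_contra hFF
  exact g2 ⟨h2, by simpa using hFF⟩

lemma ov_spec {P : List Step} (hP : InE P) :
    ∃ w, w ∈ Tl P.length ∧ GoodW w ∧ dec w = ov P ∧ undec (ov P) = w := by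
  obtain ⟨w, hwT, hdec⟩ := path_tiling P
  exact ⟨w, hwT, good_of_path w P hP hdec.symm, hdec, by rw [← hdec, undec_dec]⟩

theorem nClasses_eq_card (n : ℕ) : nClasses UDEquiv n = (goodTl n).card := by
  rw [nClasses, ← Nat.card_eq_finsetCard]
  set r := fun P Q : {P : List Step // InE P ∧ P.length = n} => UDEquiv P.1 Q.1 with hr
  have hresp : ∀ P Q : {P : List Step // InE P ∧ P.length = n}, r P Q →
      ov P.1 = ov Q.1 := by
    intro P Q h
    exact (ov_eq_iff (P.2.2.trans Q.2.2.symm)).2 h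
  have hmem : ∀ P : {P : List Step // InE P ∧ P.length = n},
      undec (ov P.1) ∈ goodTl n := by
    intro P
    obtain ⟨w, hwT, hG, hdec, hu⟩ := ov_spec P.2.1
    rw [hu]
    rw [P.2.2] at hwT
    exact Finset.mem_filter.2 ⟨hwT, hG⟩
  apply Nat.card_eq_of_bijective
    (Quot.lift (fun P => (⟨undec (ov P.1), hmem P⟩ : {w // w ∈ goodTl n}))
      (fun P Q h => Subtype.ext (congrArg undec (hresp P Q h))))
  constructor
  · intro q₁ q₂
    induction q₁ using Quot.ind with | _ P =>
    induction q₂ using Quot.ind with | _ Q =>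
    intro h
    simp only [Quot.lift_mk, Subtype.mk.injEq] at h
    apply Quot.sound
    obtain ⟨wP, _, _, hdP, huP⟩ := ov_spec P.2.1
    obtain ⟨wQ, _, _, hdQ, huQ⟩ := ov_spec Q.2.1
    rw [huP, huQ] at h
    subst h
    have hov : ov P.1 = ov Q.1 := by rw [← hdP, ← hdQ]
    exact (ov_eq_iff (P.2.2.trans Q.2.2.symm)).1 hov
  · rintro ⟨w, hw⟩
    rw [goodTl, Finset.mem_filter] at hw
    obtain ⟨hwT, hG⟩ := hw
    have hI : BInv 0 w := BInv_of_good hG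
    have hval : Valid 0 (buildP w 0) := by exact_mod_cast buildP_valid w 0 hI
    have hlen : (buildP w 0).length = n := by
      rw [buildP_length, dec_length_mem n w hwT]
    have hov : ov (buildP w 0) = dec w := buildP_ov w 0 hI
    refine ⟨Quot.mk r ⟨buildP w 0, (InE_iff_valid _).2 hval, hlen⟩, ?_⟩
    simp only [Quot.lift_mk]
    apply Subtype.ext
    simp only
    rw [hov, undec_dec]

lemma disj_cons_images (s t : Finset (List Bool)) :
    Disjoint (s.image (List.cons false)) (t.image (List.cons true)) := by
  rw [Finset.disjoint_left]
  intro a ha hb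
  simp only [Finset.mem_image] at ha hb
  obtain ⟨x, -, hx⟩ := ha
  obtain ⟨y, -, hy⟩ := hb
  rw [← hx] at hy
  simp at hy

theorem card_Tl : ∀ n : ℕ, (Tl n).card = Nat.fib (n + 1)
  | 0 => by simp [Tl]
  | 1 => by simp [Tl]
  | n + 2 => by
    show ((Tl (n + 1)).image (List.cons false) ∪ (Tl n).image (List.cons true)).card = _
    rw [Finset.card_union_of_disjoint (disj_cons_images _ _),
      Finset.card_image_of_injective _ (List.cons_injective),
      Finset.card_image_of_injective _ (List.cons_injective),
      card_Tl (n + 1), card_Tl n]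
    have h := Nat.fib_add_two (n := n + 1)
    rw [show n + 1 + 2 = n + 2 + 1 from by omega] at h
    omega

lemma card_filter_Tl (p : List Bool → Prop) [DecidablePred p] (n : ℕ) :
    ((Tl (n + 2)).filter p).card =
      ((Tl (n + 1)).filter (fun w => p (false :: w))).card +
      ((Tl n).filter (fun w => p (true :: w))).card := by
  show (((Tl (n + 1)).image (List.cons false) ∪ (Tl n).image (List.cons true)).filter p).card = _
  rw [Finset.filter_union]
  rw [Finset.card_union_of_disjoint
    (Finset.disjoint_filter_filter (disj_cons_images _ _))]
  rw [Finset.filter_image, Finset.filter_image,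
    Finset.card_image_of_injective _ (List.cons_injective),
    Finset.card_image_of_injective _ (List.cons_injective)]

/-- number of tilings with no monomer. -/
def bN (n : ℕ) : ℕ := ((Tl n).filter (fun w => w.count false = 0)).card
/-- number of tilings with exactly one monomer. -/
def aN (n : ℕ) : ℕ := ((Tl n).filter (fun w => w.count false = 1)).card
/-- number of tilings with exactly two adjacent monomers. -/
def cN (n : ℕ) : ℕ :=
  ((Tl n).filter (fun w => w.count false = 2 ∧ hasFF w = true)).card
def eN (n : ℕ) : ℕ :=
  ((Tl n).filter (fun w => w.count false = 1 ∧ w.head? = some false)).card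

lemma bN_rec (n : ℕ) : bN (n + 2) = bN n := by
  rw [bN, card_filter_Tl]
  have h1 : ((Tl (n + 1)).filter (fun w => (false :: w).count false = 0)) = ∅ := by
    apply Finset.filter_false_of_mem
    intro w _
    simp [List.count_cons]
  have h2 : ((Tl n).filter (fun w => (true :: w).count false = 0)) =
      (Tl n).filter (fun w => w.count false = 0) := by
    apply Finset.filter_congr
    intro w _
    simp [List.count_cons]
  rw [h1, h2]
  simp [bN]

lemma bN_parity : ∀ n : ℕ, bN n + bN (n + 1) = 1
  | 0 => by decide
  | n + 1 => by rw [bN_rec n, Nat.add_comm]; exact bN_parity n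

lemma aN_rec (n : ℕ) : aN (n + 2) = bN (n + 1) + aN n := by
  rw [aN, card_filter_Tl]
  have h1 : (Tl (n + 1)).filter (fun w => (false :: w).count false = 1) =
      (Tl (n + 1)).filter (fun w => w.count false = 0) := by
    apply Finset.filter_congr; intro w _; simp [List.count_cons]
  have h2 : (Tl n).filter (fun w => (true :: w).count false = 1) =
      (Tl n).filter (fun w => w.count false = 1) := by
    apply Finset.filter_congr; intro w _; simp [List.count_cons]
  rw [h1, h2]; rfl

lemma eN_rec (n : ℕ) : eN (n + 2) = bN (n + 1) := by
  rw [eN, card_filter_Tl]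
  have h2 : ((Tl n).filter
      (fun w => (true :: w).count false = 1 ∧ (true :: w).head? = some false)) = ∅ := by
    apply Finset.filter_false_of_mem
    intro w _
    simp
  rw [h2]
  simp only [Finset.card_empty, Nat.add_zero]
  apply congrArg
  apply Finset.filter_congr
  intro w _
  simp [List.count_cons]

lemma eN_succ : ∀ n : ℕ, eN (n + 1) = bN n
  | 0 => by decide
  | n + 1 => eN_rec n

lemma cN_rec (n : ℕ) : cN (n + 2) = eN (n + 1) + cN n := by
  rw [cN, card_filter_Tl]
  have h1 : (Tl (n + 1)).filter
      (fun w => (false :: w).count false = 2 ∧ hasFF (false :: w) = true) =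
      (Tl (n + 1)).filter (fun w => w.count false = 1 ∧ w.head? = some false) := by
    apply Finset.filter_congr
    intro w hw
    simp only [List.count_cons, eN]
    constructor
    · rintro ⟨hc, hFF⟩
      have hc1 : w.count false = 1 := by simp at hc; omega
      refine ⟨hc1, ?_⟩
      match w, hFF with
      | [], hFF => simp at hFF
      | true :: w', hFF =>
        exfalso
        rw [hasFF_cons_cons] at hFF
        simp only [Bool.not_false, Bool.not_true, Bool.and_false, Bool.false_or] at hFF
        have := hasFF_count _ (by simpa using hFF)
        simp [List.count_cons] at hc1
        omega
      | false :: w', hFF => rfl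
    · rintro ⟨hc1, hhd⟩
      refine ⟨by simp [hc1], ?_⟩
      match w, hhd with
      | false :: w', _ => simp
  have h2 : (Tl n).filter
      (fun w => (true :: w).count false = 2 ∧ hasFF (true :: w) = true) =
      (Tl n).filter (fun w => w.count false = 2 ∧ hasFF w = true) := by
    apply Finset.filter_congr; intro w _; simp [List.count_cons]
  rw [h1, h2]; rfl

lemma aN_cN : ∀ n : ℕ, aN n + cN n = (n + 1) / 2
  | 0 => by decide
  | 1 => by decide
  | n + 2 => by
    rw [aN_rec, cN_rec, eN_succ]
    have h1 := aN_cN n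
    have h2 := bN_parity n
    omega

lemma card_goodTl (n : ℕ) : (goodTl n).card + (n + 1) / 2 = Nat.fib (n + 1) := by
  have hsplit := Finset.card_filter_add_card_filter_not
    (s := Tl n) (p := fun w => w.count false = 1 ∨ (w.count false = 2 ∧ hasFF w = true))
  have hbad : ((Tl n).filter
      (fun w => w.count false = 1 ∨ (w.count false = 2 ∧ hasFF w = true))).card
      = aN n + cN n := by
    rw [Finset.filter_or, Finset.card_union_of_disjoint]
    · rfl
    · rw [Finset.disjoint_left]
      intro w hw1 hw2
      simp only [Finset.mem_filter] at hw1 hw2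
      omega
  have hgood : ((Tl n).filter
      (fun w => ¬(w.count false = 1 ∨ (w.count false = 2 ∧ hasFF w = true)))).card
      = (goodTl n).card := by
    apply congrArg
    apply Finset.filter_congr
    intro w _
    simp only [GoodW]
    tauto
  rw [hbad, hgood, aN_cN] at hsplit
  rw [← card_Tl n, ← hsplit]
  omega

theorem nClasses_closed (n : ℕ) : nClasses UDEquiv n + (n + 1) / 2 = Nat.fib (n + 1) := by
  rw [nClasses_eq_card]; exact card_goodTl n

/-- The number `g n` of UD-equivalence classes of paths of length `n` in ℰ
satisfies `g 0 = 1`, `g 1 = 0`, `g 2 = 1`, `g 3 = 1`, `g 4 = 3` and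
`g n = 2 g(n-1) + g(n-2) - 3 g(n-3) + g(n-5)` for `n ≥ 5`. -/
theorem count_UDEquiv_classes :
    nClasses UDEquiv 0 = 1 ∧ nClasses UDEquiv 1 = 0 ∧ nClasses UDEquiv 2 = 1 ∧
    nClasses UDEquiv 3 = 1 ∧ nClasses UDEquiv 4 = 3 ∧
    ∀ n, 5 ≤ n → (nClasses UDEquiv n : ℤ) =
      2 * nClasses UDEquiv (n - 1) + nClasses UDEquiv (n - 2)
        - 3 * nClasses UDEquiv (n - 3) + nClasses UDEquiv (n - 5) := by
  have f1 : Nat.fib 1 = 1 := by decide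
  have f2 : Nat.fib 2 = 1 := by decide
  have f3 : Nat.fib 3 = 2 := by decide
  have f4 : Nat.fib 4 = 3 := by decide
  have f5 : Nat.fib 5 = 5 := by decide
  have h0 := nClasses_closed 0
  have h1 := nClasses_closed 1
  have h2 := nClasses_closed 2
  have h3 := nClasses_closed 3
  have h4 := nClasses_closed 4
  norm_num at h0 h1 h2 h3 h4
  refine ⟨by omega, by omega, by omega, by omega, by omega, ?_⟩
  intro n hn
  obtain ⟨m, rfl⟩ : ∃ m, n = m + 5 := ⟨n - 5, by omega⟩
  simp only [show m + 5 - 1 = m + 4 from by omega, show m + 5 - 2 = m + 3 from by omega,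
    show m + 5 - 3 = m + 2 from by omega, show m + 5 - 5 = m from by omega]
  have e6 := nClasses_closed (m + 5)
  have e5 := nClasses_closed (m + 4)
  have e4 := nClasses_closed (m + 3)
  have e3 := nClasses_closed (m + 2)
  have e1 := nClasses_closed m
  rw [show m + 5 + 1 = m + 6 from by omega] at e6
  rw [show m + 4 + 1 = m + 5 from by omega] at e5
  rw [show m + 3 + 1 = m + 4 from by omega] at e4
  rw [show m + 2 + 1 = m + 3 from by omega] at e3
  have g3 := Nat.fib_add_two (n := m + 1)
  have g4 := Nat.fib_add_two (n := m + 2)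
  have g5 := Nat.fib_add_two (n := m + 3)
  have g6 := Nat.fib_add_two (n := m + 4)
  rw [show m + 1 + 2 = m + 3 from by omega, show m + 1 + 1 = m + 2 from by omega] at g3
  rw [show m + 2 + 2 = m + 4 from by omega, show m + 2 + 1 = m + 3 from by omega] at g4
  rw [show m + 3 + 2 = m + 5 from by omega, show m + 3 + 1 = m + 4 from by omega] at g5
  rw [show m + 4 + 2 = m + 6 from by omega, show m + 4 + 1 = m + 5 from by omega] at g6
  omega
end

section
/- Let ℐ_1 be the set of paths of length n ≥ 0 with n ∉ {1,3} given by (UD)^{n/2} if n is even, and (UD)^{(n−5)/2}UUUDC_2 if n is odd (n ≥ 5). Let ℐ be the union of ℐ_1 with the set of paths of the form α_1U^{k_1}C_{k_1}α_2U^{k_2}C_{k_2}⋯α_rU^{k_r}C_{k_r}α_{r+1} where r ≥ 1, k_i ≥ 2 for 1 ≤ i ≤ r, and all α_i are in ℐ_1. Then for every path P ∈ ℰ there exists exactly one path Q ∈ ℐ with |Q| = |P| such that P and Q are UC-equivalent. In other words, ℐ is a complete set of representatives of the UC-equivalence classes of ℰ. -/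
/-- Two paths are `UC`-equivalent when, for every `k ≥ 2`, the occurrences of
the pattern `U C_k` appear at the same positions in both paths. -/
def UCEquiv (P Q : List Step) : Prop :=
  ∀ k, 2 ≤ k → ∀ i : ℕ,
    (P[i]? = some Step.U ∧ P[i + 1]? = some (Step.C k)) ↔
    (Q[i]? = some Step.U ∧ Q[i + 1]? = some (Step.C k))

/-- Membership in ℐ₁ : paths `(UD)^{n/2}` for even `n ≥ 0`, and
`(UD)^{(n-5)/2} UUUD C_2` for odd `n ≥ 5`. -/
def InI1 (P : List Step) : Prop :=
  (∃ k, P = UDpow k) ∨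
  (∃ k, P = UDpow k ++ [Step.U, Step.U, Step.U, Step.D, Step.C 2])

/-- Membership in ℐ : union of ℐ₁ with the set of paths of the form
`α_1 U^{k_1} C_{k_1} α_2 U^{k_2} C_{k_2} ⋯ α_r U^{k_r} C_{k_r} α_{r+1}` with
`r ≥ 1`, all `k_i ≥ 2` and all `α_i ∈ ℐ₁` (the case `r = 0` giving ℐ₁). -/
def InI (P : List Step) : Prop :=
  ∃ (L : List (List Step × ℕ)) (b : List Step),
    (∀ t ∈ L, InI1 t.1 ∧ 2 ≤ t.2) ∧ InI1 b ∧
    P = (L.map (fun t => t.1 ++ Upow t.2 ++ [Step.C t.2])).flatten ++ b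

namespace UCProof
open Step

/-! ### Basic sums and heights -/

def sumVal (l : List Step) : ℤ := (l.map Step.val).sum

lemma sumVal_nil : sumVal [] = 0 := rfl

lemma sumVal_append (a b : List Step) : sumVal (a ++ b) = sumVal a + sumVal b := by
  simp [sumVal]

lemma hgt_eq (P : List Step) (i : ℕ) : hgt P i = sumVal (P.take i) := rfl

def defN : Step → ℕ
  | .U => 0
  | .D => 2
  | .C k => k + 1

def defSum (l : List Step) : ℕ := (l.map defN).sum

lemma sumVal_eq_sub (l : List Step) : sumVal l = (l.length : ℤ) - defSum l := by
  induction l with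
  | nil => simp [sumVal, defSum]
  | cons s t ih =>
    have : sumVal (s :: t) = s.val + sumVal t := by simp [sumVal]
    rw [this, ih]
    have : (defSum (s :: t) : ℤ) = (defN s : ℤ) + defSum t := by simp [defSum]
    rw [this]
    cases s <;> simp [Step.val, defN] <;> ring

lemma hgt_succ (P : List Step) (i : ℕ) (s : Step) (h : P[i]? = some s) :
    hgt P (i + 1) = hgt P i + s.val := by
  rw [hgt_eq, hgt_eq, List.take_succ, h]
  simp [sumVal_append, sumVal]

lemma hgt_of_length_le (P : List Step) (i : ℕ) (h : P.length ≤ i) :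
    hgt P i = hgt P P.length := by
  rw [hgt_eq, hgt_eq, List.take_of_length_le h, List.take_of_length_le le_rfl]

lemma hgt_drop (P : List Step) (s j : ℕ) :
    hgt (P.drop s) j = hgt P (s + j) - hgt P s := by
  rw [hgt_eq, hgt_eq, hgt_eq, List.take_add, sumVal_append]
  ring

lemma hgt_append_left (A B : List Step) (i : ℕ) (h : i ≤ A.length) :
    hgt (A ++ B) i = hgt A i := by
  rw [hgt_eq, hgt_eq, List.take_append_of_le_length h]

lemma hgt_append_right (A B : List Step) (j : ℕ) :
    hgt (A ++ B) (A.length + j) = sumVal A + hgt B j := by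
  rw [hgt_eq, hgt_eq]
  have : (A ++ B).take (A.length + j) = A ++ B.take j := by
    rw [List.take_add, List.take_append_of_le_length le_rfl, List.take_of_length_le le_rfl,
      List.drop_left]
  rw [this, sumVal_append]

/-! ### InE lemmas -/

lemma InE.sumVal_zero {P : List Step} (h : InE P) : sumVal P = 0 := by
  have := h.2.1
  rwa [hgt_eq, List.take_of_length_le le_rfl] at this

lemma InE_append {A B : List Step} (hA : InE A) (hB : InE B) : InE (A ++ B) := by
  obtain ⟨hA1, hA2, hA3⟩ := hA
  obtain ⟨hB1, hB2, hB3⟩ := hB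
  have hAz : sumVal A = 0 := by
    rwa [hgt_eq, List.take_of_length_le le_rfl] at hA2
  have key : ∀ i, hgt (A ++ B) i = if i ≤ A.length then hgt A i else hgt B (i - A.length) := by
    intro i
    by_cases h : i ≤ A.length
    · simp [h, hgt_append_left A B i h]
    · push_neg at h
      have : i = A.length + (i - A.length) := by omega
      rw [this, hgt_append_right, hAz]
      simp [h.not_ge]
      omega
  refine ⟨?_, ?_, ?_⟩
  · intro i; rw [key]; split <;> [exact hA1 _; exact hB1 _]
  · rw [key]
    simp only [List.length_append]
    split
    · have : A.length + B.length ≤ A.length := by assumption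
      have hB0 : B.length = 0 := by omega
      have : A.length + B.length = A.length := by omega
      rw [this, hA2]
    · have : A.length + B.length - A.length = B.length := by omega
      rw [this, hB2]
  · intro i k h
    by_cases hi : i < A.length
    · rw [List.getElem?_append, if_pos hi] at h
      obtain ⟨hk, hh⟩ := hA3 i k h
      exact ⟨hk, by rw [hgt_append_left A B i hi.le, hh]⟩
    · push_neg at hi
      rw [List.getElem?_append_right hi] at h
      obtain ⟨hk, hh⟩ := hB3 _ k h
      refine ⟨hk, ?_⟩
      have : i = A.length + (i - A.length) := by omega
      rw [this, hgt_append_right, hAz, hh, zero_add]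

lemma InE_drop {P : List Step} (hP : InE P) (s : ℕ) (hs : hgt P s = 0) :
    InE (P.drop s) := by
  obtain ⟨h1, h2, h3⟩ := hP
  refine ⟨?_, ?_, ?_⟩
  · intro i; rw [hgt_drop, hs]; simpa using h1 (s + i)
  · rw [hgt_drop, hs, List.length_drop]
    by_cases h : s ≤ P.length
    · have : s + (P.length - s) = P.length := by omega
      rw [this, h2]; ring
    · push_neg at h
      rw [hgt_of_length_le P _ (by omega), h2]; ring
  · intro i k h
    rw [List.getElem?_drop] at h
    obtain ⟨hk, hh⟩ := h3 _ k h
    exact ⟨hk, by rw [hgt_drop, hs, hh]; ring⟩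

lemma InE.C_mem {P : List Step} (hP : InE P) : ∀ s ∈ P, ∀ j, s = Step.C j → 2 ≤ j := by
  intro s hs j hj
  subst hj
  obtain ⟨n, hn, e⟩ := List.getElem_of_mem hs
  have : P[n]? = some (Step.C j) := by simp [List.getElem?_eq_some_iff, hn, e]
  exact (hP.2.2 n j this).1

end UCProof

namespace UCProof
open Step

/-! ### Building blocks -/

def special5 : List Step := [Step.U, Step.U, Step.U, Step.D, Step.C 2]

lemma UDpow_succ (k : ℕ) : UDpow (k + 1) = [Step.U, Step.D] ++ UDpow k := by
  simp [UDpow, List.replicate_succ]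

lemma UDpow_length (k : ℕ) : (UDpow k).length = 2 * k := by
  induction k with
  | zero => rfl
  | succ k ih => rw [UDpow_succ]; simp [ih]; omega

lemma Upow_length (k : ℕ) : (Upow k).length = k := by simp [Upow]

lemma sumVal_Upow (k : ℕ) : sumVal (Upow k) = k := by
  induction k with
  | zero => rfl
  | succ k ih =>
    have : Upow (k+1) = Step.U :: Upow k := by simp [Upow, List.replicate_succ]
    rw [this]
    have : sumVal (Step.U :: Upow k) = Step.U.val + sumVal (Upow k) := by simp [sumVal]
    rw [this, ih, Step.val]
    push_cast
    ring

lemma InE_of_bounded (P : List Step)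
    (h1 : ∀ i ≤ P.length, 0 ≤ hgt P i) (h2 : hgt P P.length = 0)
    (h3 : ∀ i k, P[i]? = some (Step.C k) → 2 ≤ k ∧ hgt P i = (k : ℤ)) : InE P := by
  refine ⟨fun i => ?_, h2, h3⟩
  by_cases h : i ≤ P.length
  · exact h1 i h
  · rw [hgt_of_length_le P i (by omega)]; exact h1 _ le_rfl

lemma InE_UD : InE [Step.U, Step.D] := by
  refine InE_of_bounded _ ?_ ?_ ?_
  · intro i hi
    simp only [List.length_cons, List.length_nil] at hi
    interval_cases i <;> simp [hgt, Step.val]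
  · simp [hgt, Step.val]
  · intro i k h
    have hi : i < 2 := by
      have := (List.getElem?_eq_some_iff.mp h).1
      simpa using this
    interval_cases i <;> simp_all
lemma InE_UDpow (k : ℕ) : InE (UDpow k) := by
  induction k with
  | zero =>
    refine InE_of_bounded _ ?_ ?_ ?_ <;> simp [UDpow, hgt, sumVal]
  | succ k ih => rw [UDpow_succ]; exact InE_append InE_UD ih

lemma InE_special5 : InE special5 := by
  refine InE_of_bounded _ ?_ ?_ ?_
  · intro i hi
    simp only [special5, List.length_cons, List.length_nil] at hi
    interval_cases i <;> simp [hgt, Step.val, special5]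
  · simp [hgt, Step.val, special5]
  · intro i k h
    have hi : i < 5 := by
      have := (List.getElem?_eq_some_iff.mp h).1
      simpa [special5] using this
    interval_cases i
    · simp [special5] at h
    · simp [special5] at h
    · simp [special5] at h
    · simp [special5] at h
    · have hk : k = 2 := by
        simp [special5] at h
        omega
      subst hk
      refine ⟨le_rfl, ?_⟩
      simp [hgt, special5, sumVal, Step.val]

lemma InE_I1 {P : List Step} (h : InI1 P) : InE P := by
  rcases h with ⟨k, rfl⟩ | ⟨k, rfl⟩
  · exact InE_UDpow k
  · exact InE_append (InE_UDpow k) InE_special5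

lemma InE_UpowC (k : ℕ) (hk : 2 ≤ k) : InE (Upow k ++ [Step.C k]) := by
  have hlen : (Upow k ++ [Step.C k]).length = k + 1 := by simp [Upow_length]
  have htake : ∀ i, i ≤ k → (Upow k ++ [Step.C k]).take i = Upow i := by
    intro i hi
    have : Upow k = Upow i ++ List.replicate (k - i) Step.U := by
      simp [Upow, ← List.replicate_add]; omega
    rw [this, List.append_assoc, List.take_append_of_le_length (by simp [Upow_length]),
      List.take_of_length_le (by simp [Upow_length])]
  refine InE_of_bounded _ ?_ ?_ ?_
  · intro i hi
    rw [hlen] at hi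
    by_cases h : i ≤ k
    · rw [hgt_eq, htake i h, sumVal_Upow]; positivity
    · have : i = k + 1 := by omega
      subst this
      have : (k:ℕ) + 1 = (Upow k).length + 1 := by simp [Upow_length]
      rw [this, hgt_append_right, sumVal_Upow]
      simp [hgt, sumVal, Step.val]
  · rw [hlen]
    have : (k:ℕ) + 1 = (Upow k).length + 1 := by simp [Upow_length]
    rw [this, hgt_append_right, sumVal_Upow]
    simp [hgt, sumVal, Step.val]
  · intro i k' h
    have hik : i = k ∧ k' = k := by
      by_cases hik : i < k
      · rw [List.getElem?_append, if_pos (by simp [Upow_length]; omega)] at h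
        simp [Upow, List.getElem?_replicate, hik] at h
      · have hge : (Upow k).length ≤ i := by simp [Upow_length]; omega
        rw [List.getElem?_append_right hge] at h
        rw [Upow_length] at h
        rcases Nat.eq_or_lt_of_le (Nat.not_lt.mp hik) with he | hl
        · constructor
          · omega
          · have : i - k = 0 := by omega
            rw [this] at h; simp at h; omega
        · have : i - k ≥ 1 := by omega
          have hn : ([Step.C k] : List Step)[i - k]? = none :=
            List.getElem?_eq_none (by simp; omega)
          rw [hn] at h
          simp at h
    obtain ⟨h1', rfl⟩ := hik
    subst h1'
    refine ⟨hk, ?_⟩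
    rw [hgt_eq, htake _ le_rfl, sumVal_Upow]

end UCProof

namespace UCProof
open Step

/-! ### Occurrences -/

lemma mem_of_getElem?' {l : List Step} {n : ℕ} {a : Step} (h : l[n]? = some a) : a ∈ l := by
  obtain ⟨hl, e⟩ := List.getElem?_eq_some_iff.mp h
  exact e ▸ List.getElem_mem _

def Occ (P : List Step) (i k : ℕ) : Prop :=
  P[i]? = some Step.U ∧ P[i+1]? = some (Step.C k)

lemma UCEquiv_iff (P Q : List Step) :
    UCEquiv P Q ↔ ∀ k, 2 ≤ k → ∀ i, (Occ P i k ↔ Occ Q i k) := Iff.rfl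

lemma mem_UDpow (m : ℕ) : ∀ s ∈ UDpow m, s = Step.U ∨ s = Step.D := by
  induction m with
  | zero => simp [UDpow]
  | succ m ih =>
    rw [UDpow_succ]
    intro s hs
    simp only [List.mem_append] at hs
    rcases hs with hs | hs
    · simp at hs; tauto
    · exact ih s hs

lemma special5_C (j : ℕ) (k : ℕ) (h : special5[j]? = some (Step.C k)) :
    j = 4 ∧ k = 2 := by
  have hj : j < 5 := by
    have := (List.getElem?_eq_some_iff.mp h).1
    simpa [special5] using this
  interval_cases j <;> simp_all [special5]

lemma I1_getElem_C {α : List Step} (h : InI1 α) (i k : ℕ)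
    (hC : α[i]? = some (Step.C k)) : k = 2 ∧ 1 ≤ i ∧ α[i-1]? = some Step.D := by
  rcases h with ⟨m, rfl⟩ | ⟨m, rfl⟩
  · exfalso
    have := mem_UDpow m _ (mem_of_getElem?' hC)
    simp at this
  · by_cases hi : i < (UDpow m).length
    · exfalso
      rw [List.getElem?_append, if_pos hi] at hC
      have := mem_UDpow m _ (mem_of_getElem?' hC)
      simp at this
    · push_neg at hi
      rw [List.getElem?_append_right hi] at hC
      obtain ⟨he, rfl⟩ := special5_C _ _ hC
      rw [UDpow_length] at hi he
      have hi4 : i = 2 * m + 4 := by omega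
      subst hi4
      refine ⟨rfl, by omega, ?_⟩
      rw [List.getElem?_append_right (by rw [UDpow_length]; omega)]
      rw [UDpow_length]
      have : 2 * m + 4 - 1 - 2 * m = 3 := by omega
      rw [this]
      simp [special5]

lemma noOcc_I1 {α : List Step} (h : InI1 α) (i k : ℕ) : ¬ Occ α i k := by
  rintro ⟨hU, hC⟩
  obtain ⟨-, -, hD⟩ := I1_getElem_C h (i+1) k hC
  simp at hD
  rw [hU] at hD
  simp at hD

/-! ### The canonical I1 element of each length -/

def I1elem (n : ℕ) : List Step :=
  if n % 2 = 0 then UDpow (n / 2) else UDpow ((n - 5) / 2) ++ special5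

lemma I1elem_spec (n : ℕ) (h1 : n ≠ 1) (h3 : n ≠ 3) :
    InI1 (I1elem n) ∧ (I1elem n).length = n := by
  unfold I1elem
  by_cases h : n % 2 = 0
  · rw [if_pos h]
    exact ⟨Or.inl ⟨_, rfl⟩, by rw [UDpow_length]; omega⟩
  · rw [if_neg h]
    refine ⟨Or.inr ⟨(n - 5) / 2, rfl⟩, ?_⟩
    simp [UDpow_length, special5]
    omega

lemma I1_length_ne {α : List Step} (h : InI1 α) : α.length ≠ 1 ∧ α.length ≠ 3 := by
  rcases h with ⟨m, rfl⟩ | ⟨m, rfl⟩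
  · rw [UDpow_length]; omega
  · simp only [List.length_append, UDpow_length, special5, List.length_cons, List.length_nil]
    omega

lemma I1_length_unique {α β : List Step} (hα : InI1 α) (hβ : InI1 β)
    (hlen : α.length = β.length) : α = β := by
  rcases hα with ⟨m, rfl⟩ | ⟨m, rfl⟩ <;> rcases hβ with ⟨m', rfl⟩ | ⟨m', rfl⟩ <;>
    simp [UDpow_length, special5] at hlen ⊢ <;>
    first
      | (have : m = m' := by omega
         subst this; rfl)
      | omega

/-! ### Deficit lemmas -/

lemma defSum_cons (s : Step) (t : List Step) : defSum (s :: t) = defN s + defSum t := by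
  simp [defSum]

lemma defSum_ne_one (l : List Step) (hC : ∀ s ∈ l, ∀ j, s = Step.C j → 2 ≤ j) :
    defSum l ≠ 1 := by
  induction l with
  | nil => simp [defSum]
  | cons s t ih =>
    rw [defSum_cons]
    cases s with
    | U => simpa [defN] using ih (fun s hs => hC s (by simp [hs]))
    | D => simp [defN]; omega
    | C j =>
      have : 2 ≤ j := hC _ (by simp) j rfl
      simp [defN]; omega

lemma defSum_eq_zero {l : List Step} (h : defSum l = 0) : l = Upow l.length := by
  induction l with
  | nil => simp [Upow]
  | cons s t ih =>
    rw [defSum_cons] at h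
    have h0 : defN s = 0 ∧ defSum t = 0 := by omega
    have hs : s = Step.U := by
      cases s with
      | U => rfl
      | D => simp [defN] at h0
      | C j => simp [defN] at h0
    subst hs
    rw [ih h0.2]
    simp [Upow, List.replicate_succ]

lemma defSum_eq_three {l : List Step} (hC : ∀ s ∈ l, ∀ j, s = Step.C j → 2 ≤ j)
    (h : defSum l = 3) : ∃ a b, l = Upow a ++ ([Step.C 2] ++ Upow b) := by
  induction l with
  | nil => simp [defSum] at h
  | cons s t ih =>
    rw [defSum_cons] at h
    cases s with
    | U =>
      simp [defN] at h
      obtain ⟨a, b, hab⟩ := ih (fun s hs => hC s (by simp [hs])) h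
      exact ⟨a + 1, b, by rw [hab]; simp [Upow, List.replicate_succ]⟩
    | D =>
      exfalso
      simp [defN] at h
      exact defSum_ne_one t (fun s hs => hC s (by simp [hs])) (by omega)
    | C j =>
      have hj : 2 ≤ j := hC _ (by simp) j rfl
      simp [defN] at h
      have hj2 : j = 2 := by omega
      subst hj2
      have ht : defSum t = 0 := by omega
      refine ⟨0, t.length, ?_⟩
      rw [← defSum_eq_zero ht]
      simp [Upow]

end UCProof

namespace UCProof
open Step

lemma getElem?_take' {l : List Step} {n m : ℕ} (h : m < n) : (l.take n)[m]? = l[m]? := by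
  rw [List.getElem?_take]; simp [h]

lemma hgt_eq_defSum {P : List Step} {i : ℕ} (hi : i ≤ P.length) :
    hgt P i = (i : ℤ) - defSum (P.take i) := by
  rw [hgt_eq, sumVal_eq_sub, List.length_take]
  congr 2
  omega

lemma C_take {P : List Step} (hP : InE P) (i : ℕ) :
    ∀ s ∈ P.take i, ∀ j, s = Step.C j → 2 ≤ j :=
  fun s hs => InE.C_mem hP s (List.mem_of_mem_take hs)

lemma occ_of_defSum_three {P : List Step} (hP : InE P) {i : ℕ} (hi : i ≤ P.length)
    (h : defSum (P.take i) = 3) : Occ P 1 2 ∧ 3 ≤ i := by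
  obtain ⟨a, b, hab⟩ := defSum_eq_three (C_take hP i) h
  have hlen : i = a + 1 + b := by
    have := congrArg List.length hab
    simp [List.length_take, Upow_length] at this
    omega
  have hPa : P[a]? = some (Step.C 2) := by
    have h1 : (P.take i)[a]? = P[a]? := getElem?_take' (by omega)
    rw [← h1, hab, List.getElem?_append_right (by rw [Upow_length])]
    simp [Upow_length]
  have hga : hgt P a = 2 := (hP.2.2 a 2 hPa).2
  have hta : P.take a = Upow a := by
    have h1 : P.take a = (P.take i).take a := by
      rw [List.take_take]
      congr 1
      omega
    rw [h1, hab, List.take_append_of_le_length (by rw [Upow_length]),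
      List.take_of_length_le (by rw [Upow_length])]
  have ha2 : a = 2 := by
    rw [hgt_eq, hta, sumVal_Upow] at hga
    exact_mod_cast hga
  subst ha2
  refine ⟨⟨?_, hPa⟩, by omega⟩
  have h1 : (P.take i)[1]? = P[1]? := getElem?_take' (by omega)
  rw [← h1, hab, List.getElem?_append, if_pos (by rw [Upow_length]; omega)]
  simp [Upow, List.getElem?_replicate]

/-! ### Occurrences in a block `α ++ U^k C_k ++ R` -/

lemma getElem_blk (α : List Step) (k : ℕ) (R : List Step) (j : ℕ) :
    (α ++ (Upow k ++ ([Step.C k] ++ R)))[j]? =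
      if j < α.length then α[j]?
      else if j < α.length + k then some Step.U
      else if j = α.length + k then some (Step.C k)
      else R[j - (α.length + k + 1)]? := by
  by_cases h1 : j < α.length
  · rw [List.getElem?_append, if_pos h1, if_pos h1]
  · push_neg at h1
    rw [List.getElem?_append_right h1, if_neg (by omega)]
    by_cases h2 : j < α.length + k
    · rw [if_pos h2, List.getElem?_append, if_pos (by rw [Upow_length]; omega)]
      simp [Upow, List.getElem?_replicate]
      omega
    · push_neg at h2
      rw [if_neg (by omega), List.getElem?_append_right (by rw [Upow_length]; omega),
        Upow_length]
      by_cases h3 : j = α.length + k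
      · rw [if_pos h3]
        have : j - α.length - k = 0 := by omega
        rw [this]
        simp
      · rw [if_neg h3]
        have h4 : 1 ≤ j - α.length - k := by omega
        rw [List.getElem?_append_right (by simp; omega)]
        congr 1
        simp
        omega

lemma Occ_blk {α : List Step} {k : ℕ} (R : List Step) (hα : InI1 α) (hk : 2 ≤ k)
    (i k' : ℕ) :
    Occ (α ++ (Upow k ++ ([Step.C k] ++ R))) i k' ↔
      (i = α.length + k - 1 ∧ k' = k) ∨
      (α.length + k + 1 ≤ i ∧ Occ R (i - (α.length + k + 1)) k') := by
  set g := α.length with hg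
  constructor
  · rintro ⟨hU, hC⟩
    rw [getElem_blk] at hU hC
    by_cases c1 : i + 1 < g
    · exfalso
      rw [if_pos c1] at hC
      rw [if_pos (by omega)] at hU
      obtain ⟨-, -, hD⟩ := I1_getElem_C hα (i+1) k' hC
      simp at hD
      rw [hU] at hD
      simp at hD
    · by_cases c2 : i + 1 < g + k
      · exfalso
        rw [if_neg (by omega), if_pos (by omega)] at hC
        simp at hC
      · by_cases c3 : i + 1 = g + k
        · left
          rw [if_neg (by omega), if_neg (by omega), if_pos c3] at hC
          simp at hC
          exact ⟨by omega, hC.symm⟩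
        · right
          by_cases c4 : i = g + k
          · exfalso
            rw [if_neg (by omega), if_neg (by omega), if_pos c4] at hU
            simp at hU
          · have hi : g + k + 1 ≤ i := by
              rcases Nat.lt_or_ge i g with h | h
              · exfalso
                rw [if_pos h] at hU
                omega
              · omega
            refine ⟨hi, ?_, ?_⟩
            · rw [if_neg (by omega), if_neg (by omega), if_neg (by omega)] at hU
              exact hU
            · rw [if_neg (by omega), if_neg (by omega), if_neg (by omega)] at hC
              have : i + 1 - (g + k + 1) = i - (g + k + 1) + 1 := by omega
              rw [this] at hC
              exact hC
  · rintro (⟨rfl, rfl⟩ | ⟨hi, hU, hC⟩)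
    · constructor
      · rw [getElem_blk, if_neg (by omega), if_pos (by omega)]
      · rw [getElem_blk, if_neg (by omega), if_neg (by omega), if_pos (by omega)]
    · constructor
      · rw [getElem_blk, if_neg (by omega), if_neg (by omega), if_neg (by omega)]
        exact hU
      · rw [getElem_blk, if_neg (by omega), if_neg (by omega), if_neg (by omega)]
        have : i + 1 - (g + k + 1) = i - (g + k + 1) + 1 := by omega
        rw [this]
        exact hC

lemma Occ_drop (P : List Step) (s j k : ℕ) :
    Occ (P.drop s) j k ↔ Occ P (s + j) k := by
  unfold Occ
  rw [List.getElem?_drop, List.getElem?_drop]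
  have : s + j + 1 = s + (j + 1) := by omega
  rw [this]

end UCProof

namespace UCProof
open Step

def hasOcc (P : List Step) (i : ℕ) : Prop := ∃ k, Occ P i k

theorem key : ∀ n (P : List Step), P.length = n → InE P →
    ∃! Q : List Step, (InE Q ∧ InI Q) ∧ Q.length = P.length ∧ UCEquiv P Q := by
  intro n
  induction n using Nat.strong_induction_on with
  | _ n ih =>
  intro P hlen hP
  classical
  by_cases hex : ∃ i, hasOcc P i
  · -- there is an occurrence
    set i := Nat.find hex with hidef
    have hhas : hasOcc P i := Nat.find_spec hex
    have hmin : ∀ j, j < i → ¬ hasOcc P j := fun j hj => Nat.find_min hex hj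
    obtain ⟨k, hU, hC⟩ := hhas
    have hk2 : 2 ≤ k := (hP.2.2 _ _ hC).1
    have hhC : hgt P (i+1) = (k : ℤ) := (hP.2.2 _ _ hC).2
    have hi1n : i + 1 < n := by
      rw [← hlen]; exact (List.getElem?_eq_some_iff.mp hC).1
    have hhU : hgt P (i+1) = hgt P i + 1 := by
      rw [hgt_succ P i _ hU]; simp [Step.val]
    have hgi : hgt P i = (k : ℤ) - 1 := by omega
    set g := defSum (P.take i) with hgdef
    have hgi2 : hgt P i = (i : ℤ) - g := hgt_eq_defSum (by omega)
    have hiN : i + 1 = g + k := by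
      have : (i : ℤ) + 1 = (g : ℤ) + k := by omega
      exact_mod_cast this
    have hg1 : g ≠ 1 := defSum_ne_one _ (C_take hP i)
    have hg3 : g ≠ 3 := by
      intro h
      obtain ⟨hocc, h3i⟩ := occ_of_defSum_three hP (show i ≤ P.length by omega) (by omega)
      exact hmin 1 (by omega) ⟨2, hocc⟩
    obtain ⟨hIα, hlenα⟩ := I1elem_spec g hg1 hg3
    set α := I1elem g with hαdef
    have hP2 : hgt P (i+2) = 0 := by
      rw [hgt_succ P (i+1) _ hC, hhC]; simp [Step.val]
    set P' := P.drop (i+2) with hP'def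
    have hP'E : InE P' := InE_drop hP (i+2) hP2
    have hlenP' : P'.length = n - (i+2) := by simp [hP'def, hlen]
    obtain ⟨Q', ⟨⟨hQ'E, hQ'I⟩, hQ'len, hQ'eq⟩, hQ'uniq⟩ :=
      ih (n - (i+2)) (by omega) P' hlenP' hP'E
    set Q := α ++ (Upow k ++ ([Step.C k] ++ Q')) with hQdef
    have hPocc : ∀ i' k', Occ P i' k' ↔
        ((i' = i ∧ k' = k) ∨ (i + 2 ≤ i' ∧ Occ P' (i' - (i+2)) k')) := by
      intro i' k'
      constructor
      · intro h
        rcases lt_trichotomy i' i with hlt | heq | hgt'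
        · exact absurd ⟨k', h⟩ (hmin i' hlt)
        · subst heq
          left
          refine ⟨rfl, ?_⟩
          have h2 := h.2
          rw [hC] at h2
          simpa using h2.symm
        · right
          have hge2 : i + 2 ≤ i' := by
            rcases Nat.eq_or_lt_of_le hgt' with heq1 | hlt1
            · exfalso
              have h1 := h.1
              rw [← heq1, hC] at h1
              simp at h1
            · omega
          refine ⟨hge2, ?_⟩
          rw [hP'def, Occ_drop]
          have : i + 2 + (i' - (i+2)) = i' := by omega
          rw [this]
          exact h
      · rintro (⟨rfl, rfl⟩ | ⟨hge, h⟩)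
        · exact ⟨hU, hC⟩
        · rw [hP'def, Occ_drop] at h
          have : i + 2 + (i' - (i+2)) = i' := by omega
          rwa [this] at h
    have hQocc : ∀ i' k', Occ Q i' k' ↔
        ((i' = i ∧ k' = k) ∨ (i + 2 ≤ i' ∧ Occ Q' (i' - (i+2)) k')) := by
      intro i' k'
      rw [hQdef, Occ_blk Q' hIα hk2]
      have e1 : α.length + k - 1 = i := by rw [hlenα]; omega
      have e2 : α.length + k + 1 = i + 2 := by rw [hlenα]; omega
      rw [e1, e2]
    refine ⟨Q, ⟨⟨?_, ?_⟩, ?_, ?_⟩, ?_⟩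
    · -- InE Q
      have h1 := InE_append (InE_UpowC k hk2) hQ'E
      rw [List.append_assoc] at h1
      exact InE_append (InE_I1 hIα) h1
    · -- InI Q
      obtain ⟨L', b', hL', hb', hQ''⟩ := hQ'I
      refine ⟨(α, k) :: L', b', ?_, hb', ?_⟩
      · rintro t ht
        rcases List.mem_cons.mp ht with rfl | ht'
        · exact ⟨hIα, hk2⟩
        · exact hL' t ht'
      · rw [hQdef, hQ'']
        simp
    · -- length
      rw [hQdef]
      simp only [List.length_append, Upow_length, List.length_cons, List.length_nil,
        hlenα, hQ'len, hlenP', hlen]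
      omega
    · -- UCEquiv P Q
      intro k' hk' i'
      show Occ P i' k' ↔ Occ Q i' k'
      rw [hPocc, hQocc]
      have h1 := hQ'eq k' hk' (i' - (i+2))
      constructor
      · rintro (h | ⟨h2, h3⟩)
        · exact Or.inl h
        · exact Or.inr ⟨h2, h1.mp h3⟩
      · rintro (h | ⟨h2, h3⟩)
        · exact Or.inl h
        · exact Or.inr ⟨h2, h1.mpr h3⟩
    · -- uniqueness
      rintro R ⟨⟨hRE, hRI⟩, hRlen, hReq⟩
      obtain ⟨L, b, hL, hb, hRshape⟩ := hRI
      cases L with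
      | nil =>
        exfalso
        simp at hRshape
        have h3 : Occ R i k := (hReq k hk2 i).mp ⟨hU, hC⟩
        rw [hRshape] at h3
        exact noOcc_I1 hb i k h3
      | cons t L' =>
        have hIt : InI1 t.1 := (hL t (by simp)).1
        have hkt : 2 ≤ t.2 := (hL t (by simp)).2
        set rest := (List.map (fun t => t.1 ++ Upow t.2 ++ [Step.C t.2]) L').flatten ++ b
          with hrestdef
        have hRshape' : R = t.1 ++ (Upow t.2 ++ ([Step.C t.2] ++ rest)) := by
          rw [hRshape, hrestdef]
          simp
        have h1 : Occ R (t.1.length + t.2 - 1) t.2 := by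
          rw [hRshape']
          exact (Occ_blk rest hIt hkt _ _).mpr (Or.inl ⟨rfl, rfl⟩)
        have h2 : Occ P (t.1.length + t.2 - 1) t.2 := (hReq t.2 hkt _).mpr h1
        have hle : i ≤ t.1.length + t.2 - 1 := Nat.find_min' hex ⟨t.2, h2⟩
        have h3 : Occ R i k := (hReq k hk2 i).mp ⟨hU, hC⟩
        have h4 := (Occ_blk rest hIt hkt i k).mp (by rw [hRshape'] at h3; exact h3)
        rcases h4 with ⟨he1, he2⟩ | ⟨hge, -⟩
        · have hgt' : t.1.length = g := by omega
          have hαt : t.1 = α := I1_length_unique hIt hIα (by rw [hgt', hlenα])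
          have hRdrop : R.drop (i+2) = rest := by
            have hpre : (t.1 ++ (Upow t.2 ++ [Step.C t.2])).length = i + 2 := by
              simp only [List.length_append, Upow_length, List.length_cons, List.length_nil]
              omega
            rw [hRshape']
            have : t.1 ++ (Upow t.2 ++ ([Step.C t.2] ++ rest)) =
                (t.1 ++ (Upow t.2 ++ [Step.C t.2])) ++ rest := by simp
            rw [this, ← hpre, List.drop_left]
          have hrestE : InE rest := by
            have hC' : R[i+1]? = some (Step.C k) := h3.2
            have hz : hgt R (i+2) = 0 := by
              rw [hgt_succ R (i+1) _ hC', (hRE.2.2 _ _ hC').2]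
              simp [Step.val]
            rw [← hRdrop]
            exact InE_drop hRE _ hz
          have hrestI : InI rest := ⟨L', b, fun t ht => hL t (by simp [ht]), hb, rfl⟩
          have hrestlen : rest.length = P'.length := by
            rw [← hRdrop]
            simp [hRlen, hlen, hlenP']
          have hrestEq : UCEquiv P' rest := by
            intro k' hk' j
            show Occ P' j k' ↔ Occ rest j k'
            rw [hP'def, Occ_drop]
            have hrj : Occ rest j k' ↔ Occ R (i + 2 + j) k' := by
              rw [← hRdrop, Occ_drop]
            rw [hrj]
            exact hReq k' hk' (i + 2 + j)
          have hrQ : rest = Q' := hQ'uniq rest ⟨⟨hrestE, hrestI⟩, hrestlen, hrestEq⟩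
          rw [hRshape', hαt, ← he2, hrQ, hQdef]
        · exfalso
          omega
  · -- no occurrence
    have hno : ∀ i k, ¬ Occ P i k := fun i k h => hex ⟨i, k, h⟩
    have hsum : sumVal P = 0 := InE.sumVal_zero hP
    have hds : defSum P = n := by
      rw [sumVal_eq_sub, hlen] at hsum
      omega
    have hn1 : n ≠ 1 := fun h => defSum_ne_one P (InE.C_mem hP) (by rw [hds, h])
    have hn3 : n ≠ 3 := by
      intro h
      have hds3 : defSum (P.take n) = 3 := by
        rw [List.take_of_length_le (by omega), hds, h]
      obtain ⟨hocc, -⟩ := occ_of_defSum_three hP (by omega) hds3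
      exact hno 1 2 hocc
    obtain ⟨hI1, hlenI⟩ := I1elem_spec n hn1 hn3
    refine ⟨I1elem n, ⟨⟨InE_I1 hI1, ⟨[], I1elem n, by simp, hI1, by simp⟩⟩,
      by rw [hlenI, hlen], ?_⟩, ?_⟩
    · intro k hk i
      constructor
      · intro h
        exact absurd h (hno i k)
      · intro h
        exact absurd h (noOcc_I1 hI1 i k)
    · rintro R ⟨⟨hRE, hRI⟩, hRlen, hReq⟩
      obtain ⟨L, b, hL, hb, hRshape⟩ := hRI
      cases L with
      | nil =>
        simp at hRshape
        have hb' : b = I1elem n := by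
          refine I1_length_unique hb hI1 ?_
          rw [hlenI, ← hRshape, hRlen, hlen]
        rw [hRshape, hb']
      | cons t L' =>
        exfalso
        have hIt : InI1 t.1 := (hL t (by simp)).1
        have hkt : 2 ≤ t.2 := (hL t (by simp)).2
        set rest := (List.map (fun t => t.1 ++ Upow t.2 ++ [Step.C t.2]) L').flatten ++ b
          with hrestdef
        have hRshape' : R = t.1 ++ (Upow t.2 ++ ([Step.C t.2] ++ rest)) := by
          rw [hRshape, hrestdef]; simp
        have h1 : Occ R (t.1.length + t.2 - 1) t.2 := by
          rw [hRshape']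
          exact (Occ_blk rest hIt hkt _ _).mpr (Or.inl ⟨rfl, rfl⟩)
        have h2 : Occ P (t.1.length + t.2 - 1) t.2 := (hReq t.2 hkt _).mpr h1
        exact hno _ _ h2

end UCProof


/-- ℐ is a complete set of representatives of the UC-equivalence classes of ℰ. -/
theorem I_complete_set_of_representatives_for_UCEquiv (P : List Step) (hP : InE P) :
    ∃! Q : List Step, (InE Q ∧ InI Q) ∧ Q.length = P.length ∧ UCEquiv P Q := by
  exact UCProof.key P.length P rfl hP
end
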